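/- arXiv:1706.03261 — 6 statements merged into one kernel-verified Lean document; each statement's English description precedes it below -/
import Mathlib

section
/- For every fixed symmetric positive definite matrix Λ ∈ S_n^{++}(ℝ), the function (C_1,…,C_M, μ) ↦ f({C_i}, μ, Λ) is strictly convex on ℝ^{n(M+1)}; in particular it has at most one global minimizer. -/
open Matrix Filter

noncomputable def f (n M : ℕ) (κ ν : ℝ) (Z : Fin M → Fin n → ℝ)
    (D : Fin M → Matrix (Fin n) (Fin n) ℝ) (SN : Fin M → Matrix (Fin n) (Fin n) ℝ)
    (μ0 : Fin n → ℝ) (S0 : Matrix (Fin n) (Fin n) ℝ)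
    (C : Fin M → Fin n → ℝ) (μ : Fin n → ℝ) (Λ : Matrix (Fin n) (Fin n) ℝ) : ℝ :=
  (1/2) * ∑ i, (Z i - (D i).mulVec (C i)) ⬝ᵥ ((SN i)⁻¹).mulVec (Z i - (D i).mulVec (C i))
    - ((ν - n + M)/2) * Real.log Λ.det
    + (1/2) * ∑ i, (C i - μ) ⬝ᵥ Λ.mulVec (C i - μ)
    + (κ/2) * ((μ - μ0) ⬝ᵥ Λ.mulVec (μ - μ0))
    + (1/2) * (ν • S0 * Λ).trace

lemma quad_combo {n : ℕ} (A : Matrix (Fin n) (Fin n) ℝ)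
    (u v : Fin n → ℝ) {a b : ℝ} (hab : a + b = 1) :
    (a • u + b • v) ⬝ᵥ A.mulVec (a • u + b • v)
      = a * (u ⬝ᵥ A.mulVec u) + b * (v ⬝ᵥ A.mulVec v)
        - a * b * ((u - v) ⬝ᵥ A.mulVec (u - v)) := by
  simp only [dotProduct_add, add_dotProduct, Matrix.mulVec_add,
    Matrix.mulVec_smul, smul_dotProduct, dotProduct_smul,
    Matrix.mulVec_sub, sub_dotProduct, dotProduct_sub, smul_eq_mul]
  linear_combination (a * (u ⬝ᵥ A.mulVec u) + b * (v ⬝ᵥ A.mulVec v)) * hab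

lemma comb1 {V : Type*} [AddCommGroup V] [Module ℝ V] {a b : ℝ} (hab : a + b = 1)
    (w x y : V) : w - (a • x + b • y) = a • (w - x) + b • (w - y) := by
  have h1 : a • w + b • w = w := by rw [← add_smul, hab, one_smul]
  rw [smul_sub, smul_sub,
    show a • w - a • x + (b • w - b • y) = (a • w + b • w) - (a • x + b • y) from by abel, h1]

lemma comb2 {V : Type*} [AddCommGroup V] [Module ℝ V] {a b : ℝ} (hab : a + b = 1)
    (x y w : V) : (a • x + b • y) - w = a • (x - w) + b • (y - w) := by
  have h1 : a • w + b • w = w := by rw [← add_smul, hab, one_smul]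
  rw [smul_sub, smul_sub,
    show a • x - a • w + (b • y - b • w) = (a • x + b • y) - (a • w + b • w) from by abel, h1]

lemma comb3 {V : Type*} [AddCommGroup V] [Module ℝ V] (a b : ℝ)
    (x y z w : V) : (a • x + b • y) - (a • z + b • w) = a • (x - z) + b • (y - w) := by
  rw [smul_sub, smul_sub]; abel

set_option maxRecDepth 10000 in
lemma key_expand (n M : ℕ) (κ ν : ℝ) (Z : Fin M → Fin n → ℝ)
    (D SN : Fin M → Matrix (Fin n) (Fin n) ℝ) (μ0 : Fin n → ℝ)
    (S0 Λ : Matrix (Fin n) (Fin n) ℝ)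
    (p q : (Fin M → Fin n → ℝ) × (Fin n → ℝ)) {a b : ℝ} (hab : a + b = 1) :
    f n M κ ν Z D SN μ0 S0 (a • p + b • q).1 (a • p + b • q).2 Λ
      = a * f n M κ ν Z D SN μ0 S0 p.1 p.2 Λ + b * f n M κ ν Z D SN μ0 S0 q.1 q.2 Λ
        - (a * b / 2) *
          (∑ i, ((D i).mulVec (q.1 i) - (D i).mulVec (p.1 i)) ⬝ᵥ
              ((SN i)⁻¹).mulVec ((D i).mulVec (q.1 i) - (D i).mulVec (p.1 i))
            + ∑ i, ((p.1 i - p.2) - (q.1 i - q.2)) ⬝ᵥ Λ.mulVec ((p.1 i - p.2) - (q.1 i - q.2))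
            + κ * ((p.2 - q.2) ⬝ᵥ Λ.mulVec (p.2 - q.2))) := by
  unfold f
  simp only [Prod.fst_add, Prod.snd_add, Prod.smul_fst, Prod.smul_snd, Pi.add_apply,
    Pi.smul_apply, Matrix.mulVec_add, Matrix.mulVec_smul]
  simp only [comb3 a b]
  simp only [comb1 hab]
  simp only [comb2 hab]
  simp only [quad_combo (hab := hab)]
  simp only [sub_sub_sub_cancel_left, sub_sub_sub_cancel_right]
  simp only [Finset.sum_add_distrib, Finset.sum_sub_distrib, ← Finset.mul_sum]
  linear_combination (((ν - (n:ℝ) + M)/2) * Real.log Λ.det - (1/2) * (ν • S0 * Λ).trace) * hab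
/-- For every fixed symmetric positive definite Λ, the function
`(C₁,…,C_M, μ) ↦ f({C_i}, μ, Λ)` is strictly convex on `(ℝⁿ)^M × ℝⁿ`;
in particular it has at most one global minimizer. -/
theorem stmt_1 (n M : ℕ) (hn : 1 ≤ n) (hM : 1 ≤ M)
    (κ ν : ℝ) (hκ : 0 < κ) (hν : (n : ℝ) - 1 < ν)
    (Z : Fin M → Fin n → ℝ) (D : Fin M → Matrix (Fin n) (Fin n) ℝ)
    (SN : Fin M → Matrix (Fin n) (Fin n) ℝ) (hSN : ∀ i, (SN i).PosDef)
    (μ0 : Fin n → ℝ) (S0 : Matrix (Fin n) (Fin n) ℝ) (hS0 : S0.PosDef)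
    (Λ : Matrix (Fin n) (Fin n) ℝ) (hΛ : Λ.PosDef) :
    StrictConvexOn ℝ Set.univ
      (fun p : (Fin M → Fin n → ℝ) × (Fin n → ℝ) =>
        f n M κ ν Z D SN μ0 S0 p.1 p.2 Λ) ∧
    ∀ p q : (Fin M → Fin n → ℝ) × (Fin n → ℝ),
      (∀ r : (Fin M → Fin n → ℝ) × (Fin n → ℝ), f n M κ ν Z D SN μ0 S0 p.1 p.2 Λ ≤ f n M κ ν Z D SN μ0 S0 r.1 r.2 Λ) →
      (∀ r : (Fin M → Fin n → ℝ) × (Fin n → ℝ), f n M κ ν Z D SN μ0 S0 q.1 q.2 Λ ≤ f n M κ ν Z D SN μ0 S0 r.1 r.2 Λ) →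
      p = q := by
  have hsc : StrictConvexOn ℝ Set.univ
      (fun p : (Fin M → Fin n → ℝ) × (Fin n → ℝ) =>
        f n M κ ν Z D SN μ0 S0 p.1 p.2 Λ) := by
    refine ⟨convex_univ, ?_⟩
    intro p _ q _ hpq a b ha hb hab
    simp only [smul_eq_mul]
    rw [key_expand n M κ ν Z D SN μ0 S0 Λ p q hab]
    have hS1 : (0:ℝ) ≤ ∑ i, ((D i).mulVec (q.1 i) - (D i).mulVec (p.1 i)) ⬝ᵥ
        ((SN i)⁻¹).mulVec ((D i).mulVec (q.1 i) - (D i).mulVec (p.1 i)) := by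
      refine Finset.sum_nonneg fun i _ => ?_
      have := ((hSN i).inv.posSemidef).dotProduct_mulVec_nonneg ((D i).mulVec (q.1 i) - (D i).mulVec (p.1 i))
      simpa using this
    have hS2nn : ∀ i : Fin M, (0:ℝ) ≤ ((p.1 i - p.2) - (q.1 i - q.2)) ⬝ᵥ
        Λ.mulVec ((p.1 i - p.2) - (q.1 i - q.2)) := by
      intro i
      have := hΛ.posSemidef.dotProduct_mulVec_nonneg ((p.1 i - p.2) - (q.1 i - q.2))
      simpa using this
    have hTnn : (0:ℝ) ≤ (p.2 - q.2) ⬝ᵥ Λ.mulVec (p.2 - q.2) := by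
      have := hΛ.posSemidef.dotProduct_mulVec_nonneg (p.2 - q.2)
      simpa using this
    have hgap : (0:ℝ) <
        ∑ i, ((D i).mulVec (q.1 i) - (D i).mulVec (p.1 i)) ⬝ᵥ
            ((SN i)⁻¹).mulVec ((D i).mulVec (q.1 i) - (D i).mulVec (p.1 i))
          + ∑ i, ((p.1 i - p.2) - (q.1 i - q.2)) ⬝ᵥ Λ.mulVec ((p.1 i - p.2) - (q.1 i - q.2))
          + κ * ((p.2 - q.2) ⬝ᵥ Λ.mulVec (p.2 - q.2)) := by
      by_cases hμ : p.2 = q.2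
      · have hC : p.1 ≠ q.1 := fun h => hpq (Prod.ext h hμ)
        obtain ⟨i0, hi0⟩ : ∃ i, p.1 i ≠ q.1 i := by
          by_contra h; push_neg at h; exact hC (funext h)
        have hd : ((p.1 i0 - p.2) - (q.1 i0 - q.2)) ≠ 0 := by
          rw [hμ, sub_sub_sub_cancel_right]
          exact sub_ne_zero.mpr hi0
        have hpos : (0:ℝ) < ((p.1 i0 - p.2) - (q.1 i0 - q.2)) ⬝ᵥ
            Λ.mulVec ((p.1 i0 - p.2) - (q.1 i0 - q.2)) := by
          have := hΛ.dotProduct_mulVec_pos hd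
          simpa using this
        have hS2 : (0:ℝ) < ∑ i, ((p.1 i - p.2) - (q.1 i - q.2)) ⬝ᵥ
            Λ.mulVec ((p.1 i - p.2) - (q.1 i - q.2)) :=
          Finset.sum_pos' (fun i _ => hS2nn i) ⟨i0, Finset.mem_univ i0, hpos⟩
        have hT : (0:ℝ) ≤ κ * ((p.2 - q.2) ⬝ᵥ Λ.mulVec (p.2 - q.2)) :=
          mul_nonneg hκ.le hTnn
        linarith
      · have hd : p.2 - q.2 ≠ 0 := sub_ne_zero.mpr hμ
        have hT : (0:ℝ) < (p.2 - q.2) ⬝ᵥ Λ.mulVec (p.2 - q.2) := by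
          have := hΛ.dotProduct_mulVec_pos hd
          simpa using this
        have hS2 : (0:ℝ) ≤ ∑ i, ((p.1 i - p.2) - (q.1 i - q.2)) ⬝ᵥ
            Λ.mulVec ((p.1 i - p.2) - (q.1 i - q.2)) :=
          Finset.sum_nonneg fun i _ => hS2nn i
        nlinarith
    have hab2 : 0 < a * b / 2 := by positivity
    nlinarith
  refine ⟨hsc, fun p q hp hq => ?_⟩
  exact hsc.eq_of_isMinOn (isMinOn_iff.mpr fun r _ => hp r)
    (isMinOn_iff.mpr fun r _ => hq r) (Set.mem_univ p) (Set.mem_univ q)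
end

section
/- Fix Λ ∈ S_n^{++}(ℝ) and set A_i = Λ^{-1} D_i^T (D_i Λ^{-1} D_i^T + Σ_{N_i})^{-1} for i = 1,…,M. Then the matrix κ·Id + ∑_{i=1}^M A_i D_i is invertible, and, setting μ̂ = (κ·Id + ∑_{i=1}^M A_i D_i)^{-1} (∑_{i=1}^M A_i Z_i + κ μ_0) and Ĉ_i = A_i (Z_i − D_i μ̂) + μ̂ for each i, the point ({Ĉ_i}, μ̂) is a global minimizer of (C_1,…,C_M, μ) ↦ f({C_i}, μ, Λ) on ℝ^{n(M+1)}. -/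
set_option linter.unusedSectionVars false
set_option maxHeartbeats 1000000
open Matrix Filter

section helpers
variable {m k : Type*} [Fintype m] [Fintype k]

lemma mySum_mulVec (s : Finset k) (N : k → Matrix m m ℝ) (x : m → ℝ) :
    (∑ i ∈ s, N i) *ᵥ x = ∑ i ∈ s, N i *ᵥ x := by
  ext j
  simp [Matrix.mulVec, dotProduct, Finset.sum_apply, Matrix.sum_apply, Finset.sum_mul]
  rw [Finset.sum_comm]

lemma myMulVec_sum (s : Finset k) (N : Matrix m m ℝ) (w : k → m → ℝ) :
    N *ᵥ (∑ i ∈ s, w i) = ∑ i ∈ s, N *ᵥ w i := by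
  ext j
  simp [Matrix.mulVec, dotProduct, Finset.sum_apply, Matrix.sum_apply, Finset.mul_sum]
  rw [Finset.sum_comm]

lemma myDotProduct_sum (s : Finset k) (x : m → ℝ) (w : k → m → ℝ) :
    x ⬝ᵥ (∑ i ∈ s, w i) = ∑ i ∈ s, x ⬝ᵥ w i := by
  simp [dotProduct, Finset.sum_apply, Finset.mul_sum]
  rw [Finset.sum_comm]

lemma myDotShift (D : Matrix m m ℝ) (e w : m → ℝ) :
    (D *ᵥ e) ⬝ᵥ w = e ⬝ᵥ (Dᵀ *ᵥ w) := by
  rw [dotProduct_comm, dotProduct_mulVec, ← mulVec_transpose, dotProduct_comm]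

lemma myDotSwap {P : Matrix m m ℝ} (hP : Pᵀ = P) (x y : m → ℝ) :
    x ⬝ᵥ P *ᵥ y = y ⬝ᵥ P *ᵥ x := by
  rw [dotProduct_mulVec, ← mulVec_transpose, hP, dotProduct_comm]

lemma myQuadExpand {P : Matrix m m ℝ} (hP : Pᵀ = P) (a b : m → ℝ) :
    (a + b) ⬝ᵥ P *ᵥ (a + b)
      = a ⬝ᵥ P *ᵥ a + 2 * (b ⬝ᵥ P *ᵥ a) + b ⬝ᵥ P *ᵥ b := by
  rw [mulVec_add, add_dotProduct, dotProduct_add, dotProduct_add,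
    myDotSwap hP a b]
  ring

lemma myPosSemidef_nonneg {P : Matrix m m ℝ} (hP : P.PosDef) (x : m → ℝ) :
    0 ≤ x ⬝ᵥ P *ᵥ x := by
  simpa using hP.posSemidef.dotProduct_mulVec_nonneg x

lemma myHermitian_transpose {P : Matrix m m ℝ} (hP : P.IsHermitian) : Pᵀ = P := by
  rw [← conjTranspose_eq_transpose_of_trivial]; exact hP

end helpers

/-- With `A_i = Λ⁻¹ Dᵢᵀ (Dᵢ Λ⁻¹ Dᵢᵀ + Σ_{N_i})⁻¹`, the matrix
`κ·Id + ∑ A_i D_i` is invertible, and the explicit point `({Ĉ_i}, μ̂)` is a global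
minimizer of `(C, μ) ↦ f(C, μ, Λ)`. -/
theorem stmt_2 (n M : ℕ) (hn : 1 ≤ n) (hM : 1 ≤ M)
    (κ ν : ℝ) (hκ : 0 < κ) (hν : (n : ℝ) - 1 < ν)
    (Z : Fin M → Fin n → ℝ) (D : Fin M → Matrix (Fin n) (Fin n) ℝ)
    (SN : Fin M → Matrix (Fin n) (Fin n) ℝ) (hSN : ∀ i, (SN i).PosDef)
    (μ0 : Fin n → ℝ) (S0 : Matrix (Fin n) (Fin n) ℝ) (hS0 : S0.PosDef)
    (Λ : Matrix (Fin n) (Fin n) ℝ) (hΛ : Λ.PosDef)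
    (A : Fin M → Matrix (Fin n) (Fin n) ℝ)
    (hA : ∀ i, A i = Λ⁻¹ * (D i)ᵀ * (D i * Λ⁻¹ * (D i)ᵀ + SN i)⁻¹) :
    IsUnit (κ • (1 : Matrix (Fin n) (Fin n) ℝ) + ∑ i, A i * D i) ∧
    ∀ (C : Fin M → Fin n → ℝ) (μ : Fin n → ℝ),
      f n M κ ν Z D SN μ0 S0
        (fun i => (A i).mulVec (Z i - (D i).mulVec
            ((κ • (1 : Matrix (Fin n) (Fin n) ℝ) + ∑ j, A j * D j)⁻¹.mulVec
              (∑ j, (A j).mulVec (Z j) + κ • μ0)))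
          + (κ • (1 : Matrix (Fin n) (Fin n) ℝ) + ∑ j, A j * D j)⁻¹.mulVec
              (∑ j, (A j).mulVec (Z j) + κ • μ0))
        ((κ • (1 : Matrix (Fin n) (Fin n) ℝ) + ∑ j, A j * D j)⁻¹.mulVec
          (∑ j, (A j).mulVec (Z j) + κ • μ0)) Λ
      ≤ f n M κ ν Z D SN μ0 S0 C μ Λ := by
  classical
  have hΛdet : IsUnit Λ.det := hΛ.det_pos.ne'.isUnit
  have hΛmulinv : Λ * Λ⁻¹ = 1 := Matrix.mul_nonsing_inv _ hΛdet
  have hΛt : Λᵀ = Λ := myHermitian_transpose hΛ.1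
  -- the Gram matrices
  have hGpd : ∀ i, (D i * Λ⁻¹ * (D i)ᵀ + SN i).PosDef := by
    intro i
    have h1 : (D i * Λ⁻¹ * (D i)ᵀ).PosSemidef := by
      have := hΛ.inv.posSemidef.mul_mul_conjTranspose_same (D i)
      rwa [conjTranspose_eq_transpose_of_trivial] at this
    exact Matrix.PosDef.posSemidef_add h1 (hSN i)
  have hGmulinv : ∀ i, (D i * Λ⁻¹ * (D i)ᵀ + SN i) * (D i * Λ⁻¹ * (D i)ᵀ + SN i)⁻¹ = 1 :=
    fun i => Matrix.mul_nonsing_inv _ (hGpd i).det_pos.ne'.isUnit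
  have hSmul : ∀ i, (SN i)⁻¹ * SN i = 1 :=
    fun i => Matrix.nonsing_inv_mul _ (hSN i).det_pos.ne'.isUnit
  -- key push-through identity
  have hBA : ∀ i, ((D i)ᵀ * (SN i)⁻¹ * D i + Λ) * A i = (D i)ᵀ * (SN i)⁻¹ := by
    intro i
    rw [hA i]
    calc ((D i)ᵀ * (SN i)⁻¹ * D i + Λ) * (Λ⁻¹ * (D i)ᵀ * (D i * Λ⁻¹ * (D i)ᵀ + SN i)⁻¹)
        = ((D i)ᵀ * (SN i)⁻¹ * (D i * Λ⁻¹ * (D i)ᵀ) + (Λ * Λ⁻¹) * (D i)ᵀ)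
            * (D i * Λ⁻¹ * (D i)ᵀ + SN i)⁻¹ := by noncomm_ring
      _ = ((D i)ᵀ * (SN i)⁻¹ * (D i * Λ⁻¹ * (D i)ᵀ) + (D i)ᵀ * ((SN i)⁻¹ * SN i))
            * (D i * Λ⁻¹ * (D i)ᵀ + SN i)⁻¹ := by rw [hΛmulinv, hSmul i, one_mul, mul_one]
      _ = (D i)ᵀ * (SN i)⁻¹ * ((D i * Λ⁻¹ * (D i)ᵀ + SN i) * (D i * Λ⁻¹ * (D i)ᵀ + SN i)⁻¹) := by
            noncomm_ring
      _ = (D i)ᵀ * (SN i)⁻¹ := by rw [hGmulinv i, mul_one]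
  have hΛA : ∀ i, Λ * A i = (D i)ᵀ * (D i * Λ⁻¹ * (D i)ᵀ + SN i)⁻¹ := by
    intro i
    rw [hA i, ← mul_assoc, ← mul_assoc, hΛmulinv, one_mul]
  -- invertibility of K
  obtain ⟨K, hKdef⟩ : ∃ K' : Matrix (Fin n) (Fin n) ℝ,
      K' = κ • (1 : Matrix (Fin n) (Fin n) ℝ) + ∑ i, A i * D i := ⟨_, rfl⟩
  rw [← hKdef]
  have hΛK : Λ * K = κ • Λ + ∑ i, (D i)ᵀ * (D i * Λ⁻¹ * (D i)ᵀ + SN i)⁻¹ * D i := by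
    rw [hKdef, mul_add, Finset.mul_sum, mul_smul_comm, mul_one]
    congr 1
    refine Finset.sum_congr rfl fun i _ => ?_
    rw [← mul_assoc, hΛA i]
  have hΛKpd : (Λ * K).PosDef := by
    rw [hΛK]
    have hsmul : (κ • Λ).PosDef := by
      refine Matrix.PosDef.of_dotProduct_mulVec_pos ?_ fun x hx => ?_
      · rw [IsHermitian, conjTranspose_smul]
        simp [hΛt, hΛ.1.eq]
      · rw [smul_mulVec, dotProduct_smul, smul_eq_mul]
        exact mul_pos hκ (hΛ.dotProduct_mulVec_pos hx)
    have hsum : (∑ i, (D i)ᵀ * (D i * Λ⁻¹ * (D i)ᵀ + SN i)⁻¹ * D i).PosSemidef := by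
      apply Finset.sum_induction _ Matrix.PosSemidef
      · exact fun a b ha hb => ha.add hb
      · exact Matrix.PosSemidef.zero
      · intro i _
        have := (hGpd i).inv.posSemidef.conjTranspose_mul_mul_same (D i)
        rwa [conjTranspose_eq_transpose_of_trivial] at this
    exact Matrix.PosDef.add_posSemidef hsmul hsum
  have hKdetu : IsUnit K.det := by
    have h1 : Λ.det * K.det ≠ 0 := by
      rw [← Matrix.det_mul]
      exact hΛKpd.det_pos.ne'
    exact (right_ne_zero_of_mul h1).isUnit
  have hKunit : IsUnit K := (Matrix.isUnit_iff_isUnit_det K).2 hKdetu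
  refine ⟨hKunit, ?_⟩
  obtain ⟨v, hvdef⟩ : ∃ v' : Fin n → ℝ, v' = ∑ j, (A j).mulVec (Z j) + κ • μ0 := ⟨_, rfl⟩
  rw [← hvdef]
  obtain ⟨μh, hμhdef⟩ : ∃ x : Fin n → ℝ, x = K⁻¹.mulVec v := ⟨_, rfl⟩
  rw [← hμhdef]
  obtain ⟨Ch, hChdef⟩ : ∃ c : Fin M → Fin n → ℝ,
      c = fun i => (A i).mulVec (Z i - (D i).mulVec μh) + μh := ⟨_, rfl⟩
  rw [← hChdef]
  have hKμh : K *ᵥ μh = v := by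
    rw [hμhdef, Matrix.mulVec_mulVec, Matrix.mul_nonsing_inv _ hKdetu, Matrix.one_mulVec]
  -- stationarity in μ
  have hs2 : ∑ i, (Ch i - μh) = κ • (μh - μ0) := by
    have h1 : ∀ i, Ch i - μh = A i *ᵥ Z i - (A i * D i) *ᵥ μh := by
      intro i
      simp only [hChdef, add_sub_cancel_right, Matrix.mulVec_sub, Matrix.mulVec_mulVec]
    rw [Finset.sum_congr rfl fun i _ => h1 i, Finset.sum_sub_distrib,
      ← mySum_mulVec Finset.univ (fun i => A i * D i) μh]
    have h2 : (∑ i, A i * D i) = K - κ • 1 := by rw [hKdef]; abel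
    rw [h2, Matrix.sub_mulVec, hKμh, hvdef, smul_mulVec, one_mulVec]
    module
  -- stationarity in C i
  have hs1 : ∀ i, (D i)ᵀ *ᵥ ((SN i)⁻¹ *ᵥ (Z i - D i *ᵥ Ch i)) = Λ *ᵥ (Ch i - μh) := by
    intro i
    have hw : Ch i - μh = A i *ᵥ (Z i - D i *ᵥ μh) := by
      simp only [hChdef]; simp
    have hZ : Z i - D i *ᵥ Ch i
        = (Z i - D i *ᵥ μh) - D i *ᵥ (A i *ᵥ (Z i - D i *ᵥ μh)) := by
      simp only [hChdef, Matrix.mulVec_add]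
      abel
    rw [hZ, hw]
    set w : Fin n → ℝ := Z i - D i *ᵥ μh
    have key : (D i)ᵀ * (SN i)⁻¹ - (D i)ᵀ * ((SN i)⁻¹ * (D i * A i)) = Λ * A i := by
      have h : ((D i)ᵀ * (SN i)⁻¹ * D i + Λ) * A i
          - (D i)ᵀ * ((SN i)⁻¹ * (D i * A i)) = Λ * A i := by noncomm_ring
      rw [← h, hBA i]
    calc (D i)ᵀ *ᵥ ((SN i)⁻¹ *ᵥ (w - D i *ᵥ (A i *ᵥ w)))
        = ((D i)ᵀ * (SN i)⁻¹) *ᵥ w - ((D i)ᵀ * ((SN i)⁻¹ * (D i * A i))) *ᵥ w := by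
          rw [Matrix.mulVec_sub, Matrix.mulVec_sub]
          simp only [Matrix.mulVec_mulVec, Matrix.mul_assoc]
      _ = (((D i)ᵀ * (SN i)⁻¹) - ((D i)ᵀ * ((SN i)⁻¹ * (D i * A i)))) *ᵥ w := by
          rw [Matrix.sub_mulVec]
      _ = (Λ * A i) *ᵥ w := by rw [key]
      _ = Λ *ᵥ (A i *ᵥ w) := by rw [Matrix.mulVec_mulVec]
  -- main inequality
  intro C μ
  have hSt : ∀ i, ((SN i)⁻¹)ᵀ = (SN i)⁻¹ := fun i => myHermitian_transpose (hSN i).inv.1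
  -- quadratic expansions
  have eA : ∀ i, (Z i - (D i).mulVec (C i)) ⬝ᵥ ((SN i)⁻¹).mulVec (Z i - (D i).mulVec (C i))
      = (Z i - (D i).mulVec (Ch i)) ⬝ᵥ ((SN i)⁻¹).mulVec (Z i - (D i).mulVec (Ch i))
        + 2 * (-((C i - Ch i) ⬝ᵥ Λ *ᵥ (Ch i - μh)))
        + (D i *ᵥ (C i - Ch i)) ⬝ᵥ ((SN i)⁻¹ *ᵥ (D i *ᵥ (C i - Ch i))) := by
    intro i
    have hsplit : Z i - (D i).mulVec (C i)
        = (Z i - (D i).mulVec (Ch i)) + (-(D i *ᵥ (C i - Ch i))) := by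
      rw [Matrix.mulVec_sub]; abel
    rw [hsplit, myQuadExpand (hSt i)]
    congr 1
    · congr 1
      rw [neg_dotProduct, myDotShift, hs1 i]
    · rw [Matrix.mulVec_neg, dotProduct_neg, neg_dotProduct, neg_neg]
  have eB : ∀ i, (C i - μ) ⬝ᵥ Λ.mulVec (C i - μ)
      = (Ch i - μh) ⬝ᵥ Λ.mulVec (Ch i - μh)
        + 2 * (((C i - Ch i) - (μ - μh)) ⬝ᵥ Λ *ᵥ (Ch i - μh))
        + ((C i - Ch i) - (μ - μh)) ⬝ᵥ Λ *ᵥ ((C i - Ch i) - (μ - μh)) := by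
    intro i
    have hsplit : C i - μ = (Ch i - μh) + ((C i - Ch i) - (μ - μh)) := by abel
    rw [hsplit, myQuadExpand hΛt]
  have eC : (μ - μ0) ⬝ᵥ Λ.mulVec (μ - μ0)
      = (μh - μ0) ⬝ᵥ Λ.mulVec (μh - μ0)
        + 2 * ((μ - μh) ⬝ᵥ Λ *ᵥ (μh - μ0))
        + (μ - μh) ⬝ᵥ Λ *ᵥ (μ - μh) := by
    have hsplit : μ - μ0 = (μh - μ0) + (μ - μh) := by abel
    rw [hsplit, myQuadExpand hΛt]
  -- cross-term cancellation
  have hcross : ∑ i, (((C i - Ch i) - (μ - μh)) ⬝ᵥ Λ *ᵥ (Ch i - μh))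
      = ∑ i, ((C i - Ch i) ⬝ᵥ Λ *ᵥ (Ch i - μh))
        - κ * ((μ - μh) ⬝ᵥ Λ *ᵥ (μh - μ0)) := by
    have h1 : ∀ i, ((C i - Ch i) - (μ - μh)) ⬝ᵥ Λ *ᵥ (Ch i - μh)
        = (C i - Ch i) ⬝ᵥ Λ *ᵥ (Ch i - μh) - (μ - μh) ⬝ᵥ Λ *ᵥ (Ch i - μh) := by
      intro i; rw [sub_dotProduct]
    rw [Finset.sum_congr rfl fun i _ => h1 i, Finset.sum_sub_distrib]
    congr 1
    rw [← myDotProduct_sum, ← myMulVec_sum, hs2,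
      Matrix.mulVec_smul, dotProduct_smul, smul_eq_mul]
  -- assemble
  have hf : f n M κ ν Z D SN μ0 S0 C μ Λ
      = f n M κ ν Z D SN μ0 S0 Ch μh Λ
        + ((1/2) * ∑ i, (D i *ᵥ (C i - Ch i)) ⬝ᵥ ((SN i)⁻¹ *ᵥ (D i *ᵥ (C i - Ch i)))
          + (1/2) * ∑ i, ((C i - Ch i) - (μ - μh)) ⬝ᵥ Λ *ᵥ ((C i - Ch i) - (μ - μh))
          + (κ/2) * ((μ - μh) ⬝ᵥ Λ *ᵥ (μ - μh))) := by
    simp only [f]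
    rw [Finset.sum_congr rfl fun i _ => eA i, Finset.sum_congr rfl fun i _ => eB i, eC]
    simp only [Finset.sum_add_distrib, ← Finset.mul_sum]
    rw [hcross]
    have : ∑ i, -((C i - Ch i) ⬝ᵥ Λ *ᵥ (Ch i - μh))
        = -∑ i, ((C i - Ch i) ⬝ᵥ Λ *ᵥ (Ch i - μh)) := by rw [Finset.sum_neg_distrib]
    rw [this]
    ring
  rw [hf]
  have q1 : 0 ≤ ∑ i, (D i *ᵥ (C i - Ch i)) ⬝ᵥ ((SN i)⁻¹ *ᵥ (D i *ᵥ (C i - Ch i))) :=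
    Finset.sum_nonneg fun i _ => myPosSemidef_nonneg (hSN i).inv _
  have q2 : 0 ≤ ∑ i, ((C i - Ch i) - (μ - μh)) ⬝ᵥ Λ *ᵥ ((C i - Ch i) - (μ - μh)) :=
    Finset.sum_nonneg fun i _ => myPosSemidef_nonneg hΛ _
  have q3 : 0 ≤ (μ - μh) ⬝ᵥ Λ *ᵥ (μ - μh) := myPosSemidef_nonneg hΛ _
  have h1' : 0 ≤ (1/2 : ℝ) * ∑ i, (D i *ᵥ (C i - Ch i)) ⬝ᵥ ((SN i)⁻¹ *ᵥ (D i *ᵥ (C i - Ch i))) :=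
    mul_nonneg (by norm_num) q1
  have h2' : 0 ≤ (1/2 : ℝ) * ∑ i, ((C i - Ch i) - (μ - μh)) ⬝ᵥ Λ *ᵥ ((C i - Ch i) - (μ - μh)) :=
    mul_nonneg (by norm_num) q2
  have h3' : 0 ≤ (κ/2) * ((μ - μh) ⬝ᵥ Λ *ᵥ (μ - μh)) :=
    mul_nonneg (by positivity) q3
  linarith
end

section
/- Fix ({C_i}, μ) ∈ (ℝ^n)^M × ℝ^n. The matrix S = (ν Σ_0 + κ(μ − μ_0)(μ − μ_0)^T + ∑_{i=1}^M (C_i − μ)(C_i − μ)^T)/(ν + M − n) is symmetric positive definite, and the matrix Λ̂ = S^{-1} ∈ S_n^{++}(ℝ) is a global minimizer of Λ ↦ f({C_i}, μ, Λ) over S_n^{++}(ℝ). -/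
open Matrix Filter

section AuxLemmas

variable {n : ℕ}

open scoped MatrixOrder

lemma vmv_mulVec (v x : Fin n → ℝ) : (vecMulVec v v) *ᵥ x = (v ⬝ᵥ x) • v := by
  ext i
  simp [mulVec, vecMulVec, dotProduct, Finset.mul_sum, mul_comm, mul_left_comm]

lemma vmv_psd (v : Fin n → ℝ) : (vecMulVec v v).PosSemidef := by
  refine PosSemidef.of_dotProduct_mulVec_nonneg ?_ ?_
  · ext i j
    simp [vecMulVec, conjTranspose_apply, mul_comm]
  · intro x
    rw [star_trivial, vmv_mulVec, dotProduct_smul, smul_eq_mul, dotProduct_comm]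
    exact mul_self_nonneg _

lemma psd_smul {A : Matrix (Fin n) (Fin n) ℝ} (hA : A.PosSemidef) {c : ℝ} (hc : 0 ≤ c) :
    (c • A).PosSemidef := by
  refine PosSemidef.of_dotProduct_mulVec_nonneg ?_ (fun x => ?_)
  · unfold Matrix.IsHermitian
    rw [conjTranspose_smul, hA.1.eq]
    simp
  · rw [smul_mulVec, dotProduct_smul, smul_eq_mul]
    exact mul_nonneg hc (hA.dotProduct_mulVec_nonneg x)

lemma pd_smul {A : Matrix (Fin n) (Fin n) ℝ} (hA : A.PosDef) {c : ℝ} (hc : 0 < c) :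
    (c • A).PosDef := by
  refine PosDef.of_dotProduct_mulVec_pos ?_ (fun x hx => ?_)
  · unfold Matrix.IsHermitian
    rw [conjTranspose_smul, hA.1.eq]
    simp
  · rw [smul_mulVec, dotProduct_smul, smul_eq_mul]
    exact mul_pos hc (hA.dotProduct_mulVec_pos hx)

lemma psd_sum {ι : Type*} (s : Finset ι) (A : ι → Matrix (Fin n) (Fin n) ℝ)
    (h : ∀ i ∈ s, (A i).PosSemidef) : (∑ i ∈ s, A i).PosSemidef := by
  classical
  induction s using Finset.induction_on with
  | empty => simpa using Matrix.PosSemidef.zero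
  | insert _ _ hni ih =>
    rw [Finset.sum_insert hni]
    exact (h _ (Finset.mem_insert_self _ _)).add
      (ih fun i hi => h i (Finset.mem_insert_of_mem hi))

lemma trace_eq_sum_eig {A : Matrix (Fin n) (Fin n) ℝ} (hA : A.IsHermitian) :
    A.trace = ∑ i, hA.eigenvalues i := by
  simpa using hA.trace_eq_sum_eigenvalues

lemma key_ineq {P Q : Matrix (Fin n) (Fin n) ℝ} (hP : P.PosDef) (hQ : Q.PosDef) :
    (n : ℝ) + Real.log (P.det * Q.det) ≤ (P * Q).trace := by
  set R := CFC.sqrt P with hRdef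
  have hRpsd : R.PosSemidef := (CFC.sqrt_nonneg P).posSemidef
  have hRR : R * R = P := CFC.sqrt_mul_sqrt_self P hP.posSemidef.nonneg
  have hdetR : R.det * R.det = P.det := by rw [← Matrix.det_mul, hRR]
  have hdetRne : R.det ≠ 0 := by
    intro h; rw [h, mul_zero] at hdetR; exact hP.det_pos.ne (hdetR)
  have hRunit : IsUnit R := (Matrix.isUnit_iff_isUnit_det _).mpr hdetRne.isUnit
  set X := R * Q * R with hXdef
  have hXherm : X.IsHermitian := by
    unfold Matrix.IsHermitian
    rw [hXdef, conjTranspose_mul, conjTranspose_mul, hRpsd.1.eq, hQ.1.eq, mul_assoc]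
  have hXpd : X.PosDef := by
    refine PosDef.of_dotProduct_mulVec_pos hXherm (fun x hx => ?_)
    have hRx : R *ᵥ x ≠ 0 :=
      ((Matrix.mulVec_injective_iff_isUnit.mpr hRunit).ne_iff' (by simp)).mpr hx
    have hRT : Rᵀ = R := by
      ext i j
      simpa using congrFun (congrFun hRpsd.1.eq i) j
    have h1 : star x ⬝ᵥ X *ᵥ x = star (R *ᵥ x) ⬝ᵥ Q *ᵥ (R *ᵥ x) := by
      rw [star_trivial, star_trivial, hXdef, ← Matrix.mulVec_mulVec, ← Matrix.mulVec_mulVec,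
        Matrix.dotProduct_mulVec, ← Matrix.mulVec_transpose, hRT]
    rw [h1]
    exact hQ.dotProduct_mulVec_pos hRx
  have htr : X.trace = (P * Q).trace := by
    rw [hXdef, Matrix.trace_mul_cycle, hRR]
  have hdet : X.det = P.det * Q.det := by
    rw [hXdef, Matrix.det_mul, Matrix.det_mul, mul_comm R.det, mul_assoc, hdetR, mul_comm]
  rw [← htr, ← hdet, trace_eq_sum_eig hXherm]
  have hdetX : X.det = ∏ i, hXherm.eigenvalues i := by
    simpa using hXherm.det_eq_prod_eigenvalues
  rw [hdetX, Real.log_prod (fun i _ => (hXpd.eigenvalues_pos i).ne')]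
  have hb : ∀ i ∈ Finset.univ, 1 + Real.log (hXherm.eigenvalues i) ≤ hXherm.eigenvalues i := by
    intro i _
    have := Real.log_le_sub_one_of_pos (hXpd.eigenvalues_pos i)
    linarith
  calc (n : ℝ) + ∑ i, Real.log (hXherm.eigenvalues i)
      = ∑ i : Fin n, (1 + Real.log (hXherm.eigenvalues i)) := by
        rw [Finset.sum_add_distrib]; simp
    _ ≤ ∑ i, hXherm.eigenvalues i := Finset.sum_le_sum hb

lemma vmv_trace (v : Fin n → ℝ) (Λ : Matrix (Fin n) (Fin n) ℝ) :
    (vecMulVec v v * Λ).trace = v ⬝ᵥ Λ *ᵥ v := by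
  simp only [Matrix.trace, Matrix.diag, Matrix.mul_apply, vecMulVec_apply, dotProduct, mulVec]
  rw [Finset.sum_comm]
  refine Finset.sum_congr rfl fun i _ => ?_
  rw [Finset.mul_sum]
  refine Finset.sum_congr rfl fun j _ => ?_
  ring

end AuxLemmas

/-- The matrix
`S = (ν Σ₀ + κ(μ−μ₀)(μ−μ₀)ᵀ + ∑ (C_i−μ)(C_i−μ)ᵀ)/(ν+M−n)` is symmetric positive
definite, and `Λ̂ = S⁻¹` is a global minimizer of `Λ ↦ f({C_i}, μ, Λ)` over the
symmetric positive definite matrices. -/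

theorem stmt_4 (n M : ℕ) (hn : 1 ≤ n) (hM : 1 ≤ M)
    (κ ν : ℝ) (hκ : 0 < κ) (hν : (n : ℝ) - 1 < ν)
    (Z : Fin M → Fin n → ℝ) (D : Fin M → Matrix (Fin n) (Fin n) ℝ)
    (SN : Fin M → Matrix (Fin n) (Fin n) ℝ) (hSN : ∀ i, (SN i).PosDef)
    (μ0 : Fin n → ℝ) (S0 : Matrix (Fin n) (Fin n) ℝ) (hS0 : S0.PosDef)
    (C : Fin M → Fin n → ℝ) (μ : Fin n → ℝ)
    (S : Matrix (Fin n) (Fin n) ℝ)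
    (hS : S = (ν + M - n)⁻¹ •
        (ν • S0 + κ • vecMulVec (μ - μ0) (μ - μ0)
          + ∑ i, vecMulVec (C i - μ) (C i - μ))) :
    S.PosDef ∧ (S⁻¹).PosDef ∧
    ∀ Λ : Matrix (Fin n) (Fin n) ℝ, Λ.PosDef →
      f n M κ ν Z D SN μ0 S0 C μ S⁻¹ ≤ f n M κ ν Z D SN μ0 S0 C μ Λ := by
  have hn1 : (1 : ℝ) ≤ (n : ℝ) := by exact_mod_cast hn
  have hM1 : (1 : ℝ) ≤ (M : ℝ) := by exact_mod_cast hM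
  have hν0 : 0 < ν := by linarith
  have ha : 0 < ν + (M : ℝ) - (n : ℝ) := by linarith
  set a : ℝ := ν + (M : ℝ) - (n : ℝ) with hadef
  set A : Matrix (Fin n) (Fin n) ℝ :=
    ν • S0 + κ • vecMulVec (μ - μ0) (μ - μ0) + ∑ i, vecMulVec (C i - μ) (C i - μ) with hAdef
  have hApd : A.PosDef :=
    (((pd_smul hS0 hν0).add_posSemidef (psd_smul (vmv_psd _) hκ.le)).add_posSemidef
      (psd_sum _ _ fun i _ => vmv_psd _))
  have hSeq : S = a⁻¹ • A := hS
  have hSpd : S.PosDef := hSeq ▸ pd_smul hApd (inv_pos.mpr ha)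
  have hAeq : A = a • S := by
    rw [hSeq, smul_smul, mul_inv_cancel₀ ha.ne', one_smul]
  refine ⟨hSpd, hSpd.inv, fun Λ hΛ => ?_⟩
  -- rewrite f in terms of traces
  have htrA : ∀ Λ : Matrix (Fin n) (Fin n) ℝ,
      (A * Λ).trace = (ν • S0 * Λ).trace + κ * ((μ - μ0) ⬝ᵥ Λ *ᵥ (μ - μ0))
        + ∑ i, (C i - μ) ⬝ᵥ Λ *ᵥ (C i - μ) := by
    intro Λ
    rw [hAdef, add_mul, add_mul, Matrix.trace_add, Matrix.trace_add]
    simp only [smul_mul_assoc, Matrix.trace_smul, Finset.sum_mul, Matrix.trace_sum,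
      vmv_trace, smul_eq_mul]
  have hf : ∀ Λ : Matrix (Fin n) (Fin n) ℝ,
      f n M κ ν Z D SN μ0 S0 C μ Λ =
        (1/2) * ∑ i, (Z i - (D i).mulVec (C i)) ⬝ᵥ ((SN i)⁻¹).mulVec (Z i - (D i).mulVec (C i))
        + (1/2) * (A * Λ).trace - (a/2) * Real.log Λ.det := by
    intro Λ
    rw [htrA]
    unfold f
    ring
  rw [hf, hf]
  -- trace and determinant computations for Λ = S⁻¹
  have hSdet : S.det ≠ 0 := hSpd.det_pos.ne'
  have hSS : S * S⁻¹ = 1 := Matrix.mul_nonsing_inv S hSdet.isUnit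
  have htr1 : (A * S⁻¹).trace = a * n := by
    rw [hAeq, smul_mul_assoc, Matrix.trace_smul, hSS, Matrix.trace_one, smul_eq_mul]
    simp
  have hldet : Real.log (S⁻¹).det = - Real.log S.det := by
    rw [Matrix.det_nonsing_inv, Ring.inverse_eq_inv', Real.log_inv]
  have htr2 : (A * Λ).trace = a * (S * Λ).trace := by
    rw [hAeq, smul_mul_assoc, Matrix.trace_smul, smul_eq_mul]
  have key : (n : ℝ) + (Real.log S.det + Real.log Λ.det) ≤ (S * Λ).trace := by
    have := key_ineq hSpd hΛ
    rwa [Real.log_mul hSdet hΛ.det_pos.ne'] at this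
  have key2 : a * ((n : ℝ) + (Real.log S.det + Real.log Λ.det)) ≤ a * (S * Λ).trace :=
    mul_le_mul_of_nonneg_left key ha.le
  rw [htr1, htr2, hldet]
  nlinarith [key2]
end

section
/- The function f is coercive on ℝ^{n(M+1)} × S_n^{++}(ℝ): for every sequence ({C_i^k}, μ^k, Λ^k) in (ℝ^n)^M × ℝ^n × S_n^{++}(ℝ) with ‖({C_i^k}, μ^k, Λ^k)‖ → ∞, one has f({C_i^k}, μ^k, Λ^k) → +∞. -/
open Matrix Filter

attribute [local instance] Matrix.normedAddCommGroup

/-- Auxiliary: the basic scalar inequality `a log s + a - a log a ≤ s l - a log l`. -/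
lemma aux_glog {a s l : ℝ} (ha : 0 < a) (hs : 0 < s) (hl : 0 < l) :
    a * Real.log s + a - a * Real.log a ≤ s * l - a * Real.log l := by
  have h := Real.log_le_sub_one_of_pos (show (0:ℝ) < s * l / a by positivity)
  rw [Real.log_div (by positivity) ha.ne', Real.log_mul hs.ne' hl.ne'] at h
  have h2 := mul_le_mul_of_nonneg_left h ha.le
  have : a * (s * l / a) = s * l := by field_simp
  nlinarith

/-- Auxiliary: a positive definite matrix has a positive "smallest eigenvalue" `l`
bounding the Rayleigh quotient from below, with `l ≤ trace` and `det ≤ l * (1+trace)^n`. -/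
lemma aux_eig {n : ℕ} (hn : 1 ≤ n) (A : Matrix (Fin n) (Fin n) ℝ) (hA : A.PosDef) :
    ∃ l : ℝ, 0 < l ∧ l ≤ A.trace ∧ A.det ≤ l * (1 + A.trace) ^ n ∧
      ∀ v : Fin n → ℝ, l * (v ⬝ᵥ v) ≤ v ⬝ᵥ A.mulVec v := by
  have hH := hA.isHermitian
  have hne : (Finset.univ : Finset (Fin n)).Nonempty := by
    simpa [Finset.univ_nonempty_iff] using Fin.pos_iff_nonempty.mp hn
  set ev := hH.eigenvalues with hev
  have hpos : ∀ i, 0 < ev i := hA.eigenvalues_pos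
  have hdiag : (RCLike.ofReal ∘ ev : Fin n → ℝ) = ev := by
    funext i; simp
  set U : Matrix (Fin n) (Fin n) ℝ := (hH.eigenvectorUnitary : Matrix (Fin n) (Fin n) ℝ) with hU
  have hsU : star U = Uᵀ := by
    rw [Matrix.star_eq_conjTranspose]
    ext i j
    simp [Matrix.conjTranspose_apply]
  have hUU : star U * U = 1 := Unitary.coe_star_mul_self _
  have hUU' : U * star U = 1 := Unitary.coe_mul_star_self _
  have hspec : A = U * diagonal ev * star U := by
    have := hH.spectral_theorem
    rwa [hdiag] at this
  have htr : A.trace = ∑ i, ev i := by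
    rw [hspec, trace_mul_cycle, hUU, one_mul, trace_diagonal]
  have hdet : A.det = ∏ i, ev i := by
    have := hH.det_eq_prod_eigenvalues
    simpa using this
  have hwnorm : ∀ v : Fin n → ℝ, (star U *ᵥ v) ⬝ᵥ (star U *ᵥ v) = v ⬝ᵥ v := by
    intro v
    rw [dotProduct_mulVec]
    rw [show (star U *ᵥ v) ᵥ* star U = (star U)ᵀ *ᵥ (star U *ᵥ v) from (mulVec_transpose _ _).symm,
      hsU, Matrix.transpose_transpose, mulVec_mulVec, ← hsU, hUU', one_mulVec]
  have hray : ∀ v : Fin n → ℝ, v ⬝ᵥ A.mulVec v = ∑ j, ev j * (star U *ᵥ v) j ^ 2 := by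
    intro v
    set w := star U *ᵥ v with hw
    calc v ⬝ᵥ A.mulVec v = v ⬝ᵥ (U *ᵥ (diagonal ev *ᵥ w)) := by
          rw [hspec, hw, mulVec_mulVec, mulVec_mulVec]
      _ = (v ᵥ* U) ⬝ᵥ (diagonal ev *ᵥ w) := by rw [dotProduct_mulVec]
      _ = w ⬝ᵥ (diagonal ev *ᵥ w) := by
          rw [hw, show v ᵥ* U = Uᵀ *ᵥ v from (mulVec_transpose U v).symm, hsU]
      _ = ∑ j, ev j * w j ^ 2 := by
          simp only [dotProduct, mulVec_diagonal]
          exact Finset.sum_congr rfl fun j _ => by ring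
  obtain ⟨j0, -, hj0⟩ := Finset.exists_min_image Finset.univ ev hne
  refine ⟨ev j0, hpos j0, ?_, ?_, ?_⟩
  · rw [htr]
    exact Finset.single_le_sum (fun i _ => (hpos i).le) (Finset.mem_univ j0)
  · rw [hdet, ← Finset.prod_erase_mul _ _ (Finset.mem_univ j0)]
    rw [mul_comm]
    have h1t : ∀ i, ev i ≤ 1 + A.trace := by
      intro i
      have : ev i ≤ A.trace := htr ▸
        Finset.single_le_sum (fun i _ => (hpos i).le) (Finset.mem_univ i)
      linarith
    calc ev j0 * ∏ i ∈ Finset.univ.erase j0, ev i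
        ≤ ev j0 * ∏ i ∈ Finset.univ.erase j0, (1 + A.trace) := by
          apply mul_le_mul_of_nonneg_left _ (hpos j0).le
          exact Finset.prod_le_prod (fun i _ => (hpos i).le) (fun i _ => h1t i)
      _ ≤ ev j0 * (1 + A.trace) ^ n := by
          rw [Finset.prod_const]
          apply mul_le_mul_of_nonneg_left _ (hpos j0).le
          apply pow_le_pow_right₀
          · have := (hpos j0).trans_le ((h1t j0))
            linarith [hpos j0, htr ▸ Finset.single_le_sum (fun i _ => (hpos i).le)
              (Finset.mem_univ j0)]
          · exact Finset.card_le_card (Finset.subset_univ _) |>.trans (by simp)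
  · intro v
    rw [hray v, ← hwnorm v]
    set w := star U *ᵥ v with hw
    have : ev j0 * (w ⬝ᵥ w) = ∑ j, ev j0 * w j ^ 2 := by
      simp only [dotProduct, Finset.mul_sum]
      exact Finset.sum_congr rfl fun j _ => by ring
    rw [this]
    exact Finset.sum_le_sum fun j _ => by nlinarith [hj0 j (Finset.mem_univ j), sq_nonneg (w j)]

open scoped MatrixOrder in
/-- Auxiliary: `ε * trace Λ ≤ trace (S * Λ)` when the quadratic form of `S` dominates
`ε` times the standard one and `Λ` is positive definite. -/
lemma aux_trace_mul_ge {n : ℕ} {S Λ : Matrix (Fin n) (Fin n) ℝ} (hΛ : Λ.PosDef) {ε : ℝ}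
    (hε : ∀ v : Fin n → ℝ, ε * (v ⬝ᵥ v) ≤ v ⬝ᵥ S.mulVec v) :
    ε * Λ.trace ≤ (S * Λ).trace := by
  set B := CFC.sqrt Λ with hBdef
  have hB2 : B * B = Λ := CFC.sqrt_mul_sqrt_self Λ hΛ.posSemidef.nonneg
  have hBH : B.IsHermitian := (CFC.sqrt_nonneg Λ).posSemidef.isHermitian
  have hBsym : ∀ i j, B i j = B j i := by
    intro i j
    have := congrFun (congrFun hBH j) i
    simpa [Matrix.conjTranspose_apply] using this
  have key : (S * Λ).trace = ∑ j, (fun p => B p j) ⬝ᵥ S.mulVec (fun p => B p j) := by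
    rw [← hB2, ← Matrix.mul_assoc, trace_mul_cycle]
    rw [Matrix.trace]
    apply Finset.sum_congr rfl
    intro j _
    simp only [Matrix.diag_apply, Matrix.mul_apply, dotProduct, Matrix.mulVec, Finset.sum_mul]
    rw [Finset.sum_comm]
    apply Finset.sum_congr rfl
    intro p _
    rw [Finset.mul_sum]
    apply Finset.sum_congr rfl
    intro q _
    rw [hBsym j p]
    ring
  have keytr : Λ.trace = ∑ j, (fun p => B p j) ⬝ᵥ (fun p => B p j) := by
    rw [← hB2, Matrix.trace]
    apply Finset.sum_congr rfl
    intro j _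
    simp only [Matrix.diag_apply, Matrix.mul_apply, dotProduct]
    exact Finset.sum_congr rfl fun p _ => by rw [hBsym j p]
  rw [key, keytr, Finset.mul_sum]
  exact Finset.sum_le_sum fun j _ => hε _

/-- Auxiliary: on a nonempty finite index type the sup norm is attained. -/
lemma aux_pi_exists_norm {m : ℕ} (hm : 1 ≤ m) {E : Type*} [SeminormedAddGroup E]
    (w : Fin m → E) : ∃ i, ‖w‖ ≤ ‖w i‖ := by
  obtain ⟨i, -, hi⟩ := Finset.exists_mem_eq_sup (Finset.univ : Finset (Fin m))
    (by simpa [Finset.univ_nonempty_iff] using Fin.pos_iff_nonempty.mp hm)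
    (fun i => ‖w i‖₊)
  exact ⟨i, by rw [Pi.norm_def, hi]; rfl⟩

/-- Auxiliary: the sup norm of a positive definite matrix is bounded by its trace. -/
lemma aux_norm_le_trace {n : ℕ} {Λ : Matrix (Fin n) (Fin n) ℝ} (hΛ : Λ.PosDef) :
    ‖Λ‖ ≤ Λ.trace := by
  have hq : ∀ v : Fin n → ℝ, 0 ≤ v ⬝ᵥ Λ.mulVec v := by
    intro v
    simpa using hΛ.posSemidef.dotProduct_mulVec_nonneg v
  have hsym : ∀ i j, Λ i j = Λ j i := by
    intro i j
    have := congrFun (congrFun hΛ.isHermitian j) i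
    simpa [Matrix.conjTranspose_apply] using this
  have hdiag : ∀ i, 0 ≤ Λ i i := by
    intro i
    simpa using hq (Pi.single i 1)
  have hdiag_tr : ∀ i, Λ i i ≤ Λ.trace :=
    fun i => Finset.single_le_sum (fun j _ => hdiag j) (Finset.mem_univ i)
  have htr : 0 ≤ Λ.trace := Finset.sum_nonneg fun i _ => hdiag i
  rw [Matrix.norm_le_iff htr]
  intro i j
  rcases eq_or_ne i j with rfl | hij
  · simpa [abs_of_nonneg (hdiag i)] using hdiag_tr i
  · have hquad : ∀ c : ℝ, 0 ≤ Λ i i + c * Λ i j + c * Λ j i + c * c * Λ j j := by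
      intro c
      have h := hq (Pi.single i 1 + Pi.single j c)
      rw [mulVec_add, dotProduct_add, add_dotProduct, add_dotProduct] at h
      simp only [mulVec_single, dotProduct, Pi.single_apply, ite_mul, one_mul, zero_mul,
        Finset.sum_ite_eq', Finset.mem_univ, if_true, Pi.smul_apply, op_smul_eq_mul, Matrix.col_apply] at h
      linarith [h]
    have h1 := hquad 1
    have h2 := hquad (-1)
    rw [hsym j i] at h1 h2
    rw [Real.norm_eq_abs, abs_le]
    constructor
    · nlinarith [hdiag_tr i, hdiag_tr j, hdiag i, hdiag j]
    · nlinarith [hdiag_tr i, hdiag_tr j, hdiag i, hdiag j]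

set_option maxHeartbeats 1000000 in
/-- Auxiliary: the master pointwise lower bound for `f`. -/
lemma aux_master (n M : ℕ) (hn : 1 ≤ n) (hM : 1 ≤ M) (κ ν : ℝ) (hκ : 0 < κ)
    (hν : (n : ℝ) - 1 < ν)
    (Z : Fin M → Fin n → ℝ) (D : Fin M → Matrix (Fin n) (Fin n) ℝ)
    (SN : Fin M → Matrix (Fin n) (Fin n) ℝ) (hSN : ∀ i, (SN i).PosDef)
    (μ0 : Fin n → ℝ) (S0 : Matrix (Fin n) (Fin n) ℝ)
    (ε : ℝ) (hε : 0 < ε) (hεq : ∀ v : Fin n → ℝ, ε * (v ⬝ᵥ v) ≤ v ⬝ᵥ S0.mulVec v)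
    (C : Fin M → Fin n → ℝ) (μ : Fin n → ℝ) (Λ : Matrix (Fin n) (Fin n) ℝ) (hΛ : Λ.PosDef) :
    ((ν - n + M)/2) * Real.log ((ν*ε/4) +
        ((∑ i, (C i - μ) ⬝ᵥ (C i - μ)) + κ * ((μ - μ0) ⬝ᵥ (μ - μ0)))/2)
      + ((ν*ε/4)/2) * Λ.trace
      + (((ν - n + M)/2) - ((ν - n + M)/2) * Real.log ((ν - n + M)/2)
         + (((ν - n + M)/2)*n * Real.log ((ν*ε/4)/2) + ((ν - n + M)/2)*n
            - ((ν - n + M)/2)*n * Real.log (((ν - n + M)/2)*n) - (ν*ε/4)/2))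
      ≤ f n M κ ν Z D SN μ0 S0 C μ Λ := by
  have hM1 : (1:ℝ) ≤ M := by exact_mod_cast hM
  have hn1 : (1:ℝ) ≤ n := by exact_mod_cast hn
  set a : ℝ := (ν - n + M)/2 with ha_def
  have ha : 0 < a := by simp only [ha_def]; linarith
  have hν0 : 0 < ν := by linarith
  set c₁ : ℝ := ν*ε/4 with hc₁_def
  have hc₁ : 0 < c₁ := by simp only [hc₁_def]; positivity
  obtain ⟨l, hl, hlt, hdet, hray⟩ := aux_eig hn Λ hΛ
  set t := Λ.trace with ht_def
  have ht : 0 < t := hl.trans_le hlt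
  set R2 : ℝ := (∑ i, (C i - μ) ⬝ᵥ (C i - μ)) + κ * ((μ - μ0) ⬝ᵥ (μ - μ0)) with hR2_def
  have hdots : ∀ v : Fin n → ℝ, 0 ≤ v ⬝ᵥ v := fun v =>
    Finset.sum_nonneg fun j _ => mul_self_nonneg _
  have hR2nn : 0 ≤ R2 := by
    apply add_nonneg (Finset.sum_nonneg fun i _ => hdots _)
    exact mul_nonneg hκ.le (hdots _)
  have hT1 : 0 ≤ (1/2) * ∑ i, (Z i - (D i).mulVec (C i)) ⬝ᵥ
      ((SN i)⁻¹).mulVec (Z i - (D i).mulVec (C i)) := by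
    apply mul_nonneg (by norm_num)
    apply Finset.sum_nonneg
    intro i _
    simpa using ((hSN i).inv).posSemidef.dotProduct_mulVec_nonneg (Z i - (D i).mulVec (C i))
  have hT34 : (l/2) * R2 ≤ (1/2) * ∑ i, (C i - μ) ⬝ᵥ Λ.mulVec (C i - μ)
      + (κ/2) * ((μ - μ0) ⬝ᵥ Λ.mulVec (μ - μ0)) := by
    have h3 : ∑ i, l * ((C i - μ) ⬝ᵥ (C i - μ)) ≤ ∑ i, (C i - μ) ⬝ᵥ Λ.mulVec (C i - μ) :=
      Finset.sum_le_sum fun i _ => hray _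
    have h4 := hray (μ - μ0)
    have h4' := mul_le_mul_of_nonneg_left h4 hκ.le
    rw [hR2_def]
    rw [← Finset.mul_sum] at h3
    nlinarith [h3]
  have hT5 : 2 * c₁ * t ≤ (1/2) * (ν • S0 * Λ).trace := by
    have := aux_trace_mul_ge hΛ hεq
    have hsm : (ν • S0 * Λ).trace = ν * (S0 * Λ).trace := by
      rw [smul_mul_assoc, trace_smul, smul_eq_mul]
    rw [hsm, hc₁_def]
    nlinarith [this]
  have hT2 : a * Real.log Λ.det ≤ a * Real.log l + a * n * Real.log (1 + t) := by
    have hlog : Real.log Λ.det ≤ Real.log (l * (1 + t)^n) :=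
      Real.log_le_log hΛ.det_pos hdet
    rw [Real.log_mul hl.ne' (by positivity), Real.log_pow] at hlog
    calc a * Real.log Λ.det ≤ a * (Real.log l + n * Real.log (1+t)) :=
          mul_le_mul_of_nonneg_left hlog ha.le
      _ = a * Real.log l + a * n * Real.log (1+t) := by ring
  have hg1 : a * Real.log (c₁ + R2/2) + a - a * Real.log a
      ≤ (c₁ + R2/2) * l - a * Real.log l := aux_glog ha (by positivity) hl
  have hg2 : (a*n) * Real.log (c₁/2) + (a*n) - (a*n) * Real.log (a*n)
      ≤ (c₁/2) * (1 + t) - (a*n) * Real.log (1 + t) := by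
    apply aux_glog (by positivity) (by positivity) (by positivity)
  have hlc : c₁ * l ≤ c₁ * t := mul_le_mul_of_nonneg_left hlt hc₁.le
  rw [f, ← ha_def]
  have expand : (c₁ + R2/2) * l = c₁ * l + (l/2) * R2 := by ring
  linarith [hT1, hT34, hT5, hT2, hg1, hg2, hlc, expand]


noncomputable def Gfun (a c₁ c₂ γ K : ℝ) : ℝ → ℝ := fun N =>
  min (a * Real.log c₁ + (c₁/2) * N + K) (a * Real.log (c₁ + c₂ * (N/2 - γ)^2) + K)


lemma aux_G_tendsto {a c₁ c₂ γ K : ℝ} (ha : 0 < a) (hc₁ : 0 < c₁) (hc₂ : 0 < c₂) :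
    Tendsto (Gfun a c₁ c₂ γ K) atTop atTop := by
  have hb1 : Tendsto (fun N : ℝ => a * Real.log c₁ + (c₁/2) * N + K) atTop atTop := by
    apply tendsto_atTop_add_const_right
    apply tendsto_atTop_add_const_left
    exact Tendsto.const_mul_atTop (by positivity) tendsto_id
  have hin : Tendsto (fun N : ℝ => c₁ + c₂ * (N/2 - γ)^2) atTop atTop := by
    apply tendsto_atTop_add_const_left
    apply Tendsto.const_mul_atTop hc₂
    have h1 : Tendsto (fun N : ℝ => N/2 - γ) atTop atTop := by
      simp only [sub_eq_add_neg]
      apply tendsto_atTop_add_const_right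
      exact Tendsto.atTop_div_const two_pos tendsto_id
    exact (tendsto_pow_atTop two_ne_zero).comp h1
  have hb2 : Tendsto (fun N : ℝ => a * Real.log (c₁ + c₂ * (N/2 - γ)^2) + K) atTop atTop := by
    apply tendsto_atTop_add_const_right
    exact Tendsto.const_mul_atTop ha (Real.tendsto_log_atTop.comp hin)
  rw [tendsto_atTop]
  intro b
  filter_upwards [hb1.eventually_ge_atTop b, hb2.eventually_ge_atTop b] with N h1 h2
  exact le_min h1 h2

set_option maxHeartbeats 1000000 in
lemma aux_lower (n M : ℕ) (hn : 1 ≤ n) (hM : 1 ≤ M) (κ ν : ℝ) (hκ : 0 < κ)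
    (hν : (n : ℝ) - 1 < ν)
    (Z : Fin M → Fin n → ℝ) (D : Fin M → Matrix (Fin n) (Fin n) ℝ)
    (SN : Fin M → Matrix (Fin n) (Fin n) ℝ) (hSN : ∀ i, (SN i).PosDef)
    (μ0 : Fin n → ℝ) (S0 : Matrix (Fin n) (Fin n) ℝ)
    (ε : ℝ) (hε : 0 < ε) (hεq : ∀ v : Fin n → ℝ, ε * (v ⬝ᵥ v) ≤ v ⬝ᵥ S0.mulVec v)
    (C : Fin M → Fin n → ℝ) (μ : Fin n → ℝ) (Λ : Matrix (Fin n) (Fin n) ℝ) (hΛ : Λ.PosDef)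
    (N : ℝ) (hγN : 2 * ‖μ0‖ ≤ N)
    (hcase : N ≤ ‖C‖ ∨ N ≤ ‖μ‖ ∨ N ≤ ‖Λ‖) (fval : ℝ)
    (hmaster : ((ν - n + M)/2) * Real.log ((ν*ε/4) +
        ((∑ i, (C i - μ) ⬝ᵥ (C i - μ)) + κ * ((μ - μ0) ⬝ᵥ (μ - μ0)))/2)
      + ((ν*ε/4)/2) * Λ.trace
      + (((ν - n + M)/2) - ((ν - n + M)/2) * Real.log ((ν - n + M)/2)
         + (((ν - n + M)/2)*n * Real.log ((ν*ε/4)/2) + ((ν - n + M)/2)*n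
            - ((ν - n + M)/2)*n * Real.log (((ν - n + M)/2)*n) - (ν*ε/4)/2))
      ≤ fval) :
    Gfun ((ν - n + M)/2) (ν*ε/4) (min κ 1 / 2) ‖μ0‖
      (((ν - n + M)/2) - ((ν - n + M)/2) * Real.log ((ν - n + M)/2)
         + (((ν - n + M)/2)*n * Real.log ((ν*ε/4)/2) + ((ν - n + M)/2)*n
            - ((ν - n + M)/2)*n * Real.log (((ν - n + M)/2)*n) - (ν*ε/4)/2)) N
      ≤ fval := by
  have hM1 : (1:ℝ) ≤ M := by exact_mod_cast hM
  have hn1 : (1:ℝ) ≤ n := by exact_mod_cast hn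
  set a : ℝ := (ν - n + M)/2 with ha_def
  have ha : 0 < a := by rw [ha_def]; linarith
  have hν0 : 0 < ν := by linarith
  set c₁ : ℝ := ν*ε/4 with hc₁_def
  have hc₁ : 0 < c₁ := by rw [hc₁_def]; positivity
  set c₂ : ℝ := min κ 1 / 2 with hc₂_def
  have hc₂ : 0 < c₂ := by rw [hc₂_def]; have := lt_min hκ one_pos; linarith
  have hc₂κ : 2 * c₂ ≤ κ := by rw [hc₂_def]; have := min_le_left κ 1; linarith
  have hc₂1 : 2 * c₂ ≤ 1 := by rw [hc₂_def]; have := min_le_right κ 1; linarith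
  set γ : ℝ := ‖μ0‖ with hγ_def
  have hγ0 : 0 ≤ γ := norm_nonneg _
  have hN0 : 0 ≤ N := by linarith
  have hNγ : 0 ≤ N/2 - γ := by linarith
  set R2 : ℝ := (∑ i, (C i - μ) ⬝ᵥ (C i - μ)) + κ * ((μ - μ0) ⬝ᵥ (μ - μ0)) with hR2_def
  have hdots : ∀ m (v : Fin m → ℝ), 0 ≤ v ⬝ᵥ v := fun m v =>
    Finset.sum_nonneg fun j _ => mul_self_nonneg _
  have hCnn : 0 ≤ ∑ i, (C i - μ) ⬝ᵥ (C i - μ) := Finset.sum_nonneg fun i _ => hdots _ _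
  have hR2nn : 0 ≤ R2 := by
    rw [hR2_def]
    exact add_nonneg hCnn (mul_nonneg hκ.le (hdots _ _))
  have ht0 : 0 ≤ Λ.trace := le_trans (norm_nonneg Λ) (aux_norm_le_trace hΛ)
  set K : ℝ := a - a * Real.log a
         + (a*n * Real.log (c₁/2) + a*n - a*n * Real.log (a*n) - c₁/2) with hK_def
  -- the key quantity in hmaster
  have hmain : a * Real.log (c₁ + R2/2) + (c₁/2) * Λ.trace + K ≤ fval := hmaster
  -- helper: squares below dot products
  have hdot_ge : ∀ (m : ℕ) (v : Fin m → ℝ) (j : Fin m), v j * v j ≤ v ⬝ᵥ v := by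
    intro m v j
    rw [dotProduct]
    exact Finset.single_le_sum (fun p _ => mul_self_nonneg (v p)) (Finset.mem_univ j)
  have hsq_mu : ∀ j : Fin n, (μ j - μ0 j)^2 ≤ (μ - μ0) ⬝ᵥ (μ - μ0) := by
    intro j
    have : ((μ - μ0) j) * ((μ - μ0) j) = (μ j - μ0 j)^2 := by
      simp [Pi.sub_apply]; ring
    calc (μ j - μ0 j)^2 = ((μ - μ0) j) * ((μ - μ0) j) := this.symm
      _ ≤ (μ - μ0) ⬝ᵥ (μ - μ0) := hdot_ge _ _ j
  have hsq_C : ∀ (i : Fin M) (j : Fin n), (C i j - μ j)^2 ≤ R2 := by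
    intro i j
    have h1 : ((C i - μ) j) * ((C i - μ) j) = (C i j - μ j)^2 := by
      simp [Pi.sub_apply]; ring
    have h2 : (C i j - μ j)^2 ≤ (C i - μ) ⬝ᵥ (C i - μ) := by
      calc (C i j - μ j)^2 = ((C i - μ) j) * ((C i - μ) j) := h1.symm
        _ ≤ (C i - μ) ⬝ᵥ (C i - μ) := hdot_ge _ _ j
    have h3 : (C i - μ) ⬝ᵥ (C i - μ) ≤ ∑ i', (C i' - μ) ⬝ᵥ (C i' - μ) :=
      Finset.single_le_sum (f := fun i' => (C i' - μ) ⬝ᵥ (C i' - μ))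
        (fun i' _ => hdots _ _) (Finset.mem_univ i)
    have h4 : 0 ≤ κ * ((μ - μ0) ⬝ᵥ (μ - μ0)) := mul_nonneg hκ.le (hdots _ _)
    rw [hR2_def]; linarith
  -- the lower bound on R2 in the two "vector" cases
  have hmu_case : ∀ j : Fin n, N/2 ≤ |μ j| → c₂ * (N/2 - γ)^2 ≤ R2/2 := by
    intro j hj
    have hμ0j : |μ0 j| ≤ γ := by
      rw [hγ_def]
      simpa [Real.norm_eq_abs] using norm_le_pi_norm μ0 j
    have habs : N/2 - γ ≤ |μ j - μ0 j| := by
      have := abs_sub_abs_le_abs_sub (μ j) (μ0 j)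
      linarith
    have hsq : (N/2 - γ)^2 ≤ (μ j - μ0 j)^2 := by
      rw [← sq_abs (μ j - μ0 j)]
      exact pow_le_pow_left₀ hNγ habs 2
    have := hsq_mu j
    have hκR : κ * (N/2 - γ)^2 ≤ κ * ((μ - μ0) ⬝ᵥ (μ - μ0)) :=
      mul_le_mul_of_nonneg_left (le_trans hsq this) hκ.le
    have h2 : 2 * c₂ * (N/2 - γ)^2 ≤ κ * (N/2 - γ)^2 :=
      mul_le_mul_of_nonneg_right hc₂κ (sq_nonneg _)
    rw [hR2_def]
    linarith
  have hR2big : (N ≤ ‖C‖ ∨ N ≤ ‖μ‖) → c₂ * (N/2 - γ)^2 ≤ R2/2 := by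
    rintro (hC | hμ)
    · obtain ⟨i, hi⟩ := aux_pi_exists_norm hM C
      obtain ⟨j, hj⟩ := aux_pi_exists_norm hn (C i)
      have hCij : N ≤ |C i j| := by
        rw [← Real.norm_eq_abs]
        exact le_trans hC (le_trans hi hj)
      rcases le_or_gt (N/2) (|μ j|) with hb | hb
      · exact hmu_case j hb
      · have habs : N/2 - γ ≤ |C i j - μ j| := by
          have := abs_sub_abs_le_abs_sub (C i j) (μ j)
          linarith
        have hsq : (N/2 - γ)^2 ≤ (C i j - μ j)^2 := by
          rw [← sq_abs (C i j - μ j)]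
          exact pow_le_pow_left₀ hNγ habs 2
        have h2 : 2 * c₂ * (N/2 - γ)^2 ≤ (N/2 - γ)^2 := by
          nlinarith [sq_nonneg (N/2 - γ)]
        have := hsq_C i j
        linarith
    · obtain ⟨j, hj⟩ := aux_pi_exists_norm hn μ
      apply hmu_case j
      rw [← Real.norm_eq_abs]
      calc N/2 ≤ N := by linarith
        _ ≤ ‖μ‖ := hμ
        _ ≤ ‖μ j‖ := hj
  rcases hcase with hC | hμ | hΛn
  · refine le_trans (min_le_right _ _) (le_trans ?_ hmain)
    have h := hR2big (Or.inl hC)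
    have hlog : Real.log (c₁ + c₂ * (N/2 - γ)^2) ≤ Real.log (c₁ + R2/2) :=
      Real.log_le_log (by positivity) (by linarith)
    have := mul_le_mul_of_nonneg_left hlog ha.le
    have ht' : 0 ≤ (c₁/2) * Λ.trace := mul_nonneg (by positivity) ht0
    linarith
  · refine le_trans (min_le_right _ _) (le_trans ?_ hmain)
    have h := hR2big (Or.inr hμ)
    have hlog : Real.log (c₁ + c₂ * (N/2 - γ)^2) ≤ Real.log (c₁ + R2/2) :=
      Real.log_le_log (by positivity) (by linarith)
    have := mul_le_mul_of_nonneg_left hlog ha.le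
    have ht' : 0 ≤ (c₁/2) * Λ.trace := mul_nonneg (by positivity) ht0
    linarith
  · refine le_trans (min_le_left _ _) (le_trans ?_ hmain)
    have htN : N ≤ Λ.trace := le_trans hΛn (aux_norm_le_trace hΛ)
    have hlog : Real.log c₁ ≤ Real.log (c₁ + R2/2) :=
      Real.log_le_log hc₁ (by linarith)
    have h1 := mul_le_mul_of_nonneg_left hlog ha.le
    have h2 : (c₁/2) * N ≤ (c₁/2) * Λ.trace :=
      mul_le_mul_of_nonneg_left htN (by positivity)
    linarith


/-- f is coercive on `(ℝⁿ)^M × ℝⁿ × S_n^{++}(ℝ)`: along any sequence of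
points with positive definite Λ-component whose norm tends to infinity, f tends to +∞. -/
theorem stmt_5 (n M : ℕ) (hn : 1 ≤ n) (hM : 1 ≤ M)
    (κ ν : ℝ) (hκ : 0 < κ) (hν : (n : ℝ) - 1 < ν)
    (Z : Fin M → Fin n → ℝ) (D : Fin M → Matrix (Fin n) (Fin n) ℝ)
    (SN : Fin M → Matrix (Fin n) (Fin n) ℝ) (hSN : ∀ i, (SN i).PosDef)
    (μ0 : Fin n → ℝ) (S0 : Matrix (Fin n) (Fin n) ℝ) (hS0 : S0.PosDef)
    (x : ℕ → (Fin M → Fin n → ℝ) × (Fin n → ℝ) × Matrix (Fin n) (Fin n) ℝ)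
    (hx : ∀ k, (x k).2.2.PosDef)
    (hnorm : Filter.Tendsto (fun k => ‖x k‖) Filter.atTop Filter.atTop) :
    Filter.Tendsto (fun k => f n M κ ν Z D SN μ0 S0 (x k).1 (x k).2.1 (x k).2.2)
      Filter.atTop Filter.atTop := by
  obtain ⟨ε, hε, -, -, hεq⟩ := aux_eig hn S0 hS0
  have hM1 : (1:ℝ) ≤ M := by exact_mod_cast hM
  have hn1 : (1:ℝ) ≤ n := by exact_mod_cast hn
  have ha : 0 < (ν - n + M)/2 := by linarith
  have hν0 : 0 < ν := by linarith
  have hc₁ : 0 < ν*ε/4 := by positivity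
  have hc₂ : 0 < min κ 1 / 2 := by have := lt_min hκ one_pos; linarith
  have hG := aux_G_tendsto (γ := ‖μ0‖)
    (K := ((ν - n + M)/2) - ((ν - n + M)/2) * Real.log ((ν - n + M)/2)
         + (((ν - n + M)/2)*n * Real.log ((ν*ε/4)/2) + ((ν - n + M)/2)*n
            - ((ν - n + M)/2)*n * Real.log (((ν - n + M)/2)*n) - (ν*ε/4)/2))
    ha hc₁ hc₂
  apply tendsto_atTop_mono' atTop _ (hG.comp hnorm)
  filter_upwards [hnorm.eventually (eventually_ge_atTop (2 * ‖μ0‖))] with k hk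
  have hcase : ‖x k‖ ≤ ‖(x k).1‖ ∨ ‖x k‖ ≤ ‖(x k).2.1‖ ∨ ‖x k‖ ≤ ‖(x k).2.2‖ := by
    have h1 : ‖x k‖ = max ‖(x k).1‖ ‖(x k).2‖ := Prod.norm_def _
    have h2 : ‖(x k).2‖ = max ‖(x k).2.1‖ ‖(x k).2.2‖ := Prod.norm_def _
    rcases le_max_iff.mp h1.le with h | h
    · exact Or.inl h
    · rcases le_max_iff.mp (h.trans h2.le) with h' | h'
      · exact Or.inr (Or.inl h')
      · exact Or.inr (Or.inr h')
  exact aux_lower n M hn hM κ ν hκ hν Z D SN hSN μ0 S0 ε hε hεq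
    (x k).1 (x k).2.1 (x k).2.2 (hx k) (‖x k‖) hk hcase _
    (aux_master n M hn hM κ ν hκ hν Z D SN hSN μ0 S0 ε hε hεq
      (x k).1 (x k).2.1 (x k).2.2 (hx k))
end

section
/- The alternating-minimization map G is continuous on (ℝ^n)^M × ℝ^n × S_n^{++}(ℝ), and G maps this set into itself (in particular the Λ-component of G(x) is symmetric positive definite for every x in the domain). -/
open Matrix Filter
section helpers
variable {X : Type*} [TopologicalSpace X] {s : Set X} {l : ℕ}

lemma conOn_mul {f g : X → Matrix (Fin l) (Fin l) ℝ} (hf : ContinuousOn f s)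
    (hg : ContinuousOn g s) : ContinuousOn (fun x => f x * g x) s :=
  (continuous_fst.matrix_mul continuous_snd).comp_continuousOn (hf.prodMk hg)

lemma conOn_mulVec {f : X → Matrix (Fin l) (Fin l) ℝ} {g : X → Fin l → ℝ}
    (hf : ContinuousOn f s) (hg : ContinuousOn g s) :
    ContinuousOn (fun x => (f x).mulVec (g x)) s :=
  (continuous_fst.matrix_mulVec continuous_snd).comp_continuousOn (hf.prodMk hg)

lemma conOn_vecMulVec {f g : X → Fin l → ℝ} (hf : ContinuousOn f s)
    (hg : ContinuousOn g s) : ContinuousOn (fun x => vecMulVec (f x) (g x)) s := by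
  have h : Continuous (fun p : (Fin l → ℝ) × (Fin l → ℝ) => vecMulVec p.1 p.2) :=
    continuous_matrix fun i j =>
      ((continuous_apply i).comp continuous_fst).mul ((continuous_apply j).comp continuous_snd)
  exact h.comp_continuousOn (hf.prodMk hg)

lemma conOn_inv {f : X → Matrix (Fin l) (Fin l) ℝ} (hf : ContinuousOn f s)
    (h : ∀ x ∈ s, (f x).det ≠ 0) : ContinuousOn (fun x => (f x)⁻¹) s := fun x hx =>
  ((continuousAt_matrix_inv (f x) (by
      rw [Ring.inverse_eq_inv']; exact continuousAt_inv₀ (h x hx))).comp_continuousWithinAt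
    (hf x hx))

lemma posDef_smul_pos {c : ℝ} {A : Matrix (Fin l) (Fin l) ℝ} (hc : 0 < c) (hA : A.PosDef) :
    (c • A).PosDef := hA.smul hc

lemma posSemidef_smul_nonneg {c : ℝ} {A : Matrix (Fin l) (Fin l) ℝ} (hc : 0 ≤ c)
    (hA : A.PosSemidef) : (c • A).PosSemidef := hA.smul hc

lemma vv_psd (v : Fin l → ℝ) : (vecMulVec v v).PosSemidef := by
  rw [vecMulVec_eq Unit, show Matrix.replicateRow Unit v = (Matrix.replicateCol Unit v)ᴴ by
    rw [Matrix.conjTranspose_replicateCol, star_trivial]]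
  exact Matrix.posSemidef_self_mul_conjTranspose _

end helpers
/-- The alternating-minimization map `G` on `(ℝⁿ)^M × ℝⁿ × S_n^{++}(ℝ)`. -/
noncomputable def G (n M : ℕ) (κ ν : ℝ) (Z : Fin M → Fin n → ℝ)
    (D : Fin M → Matrix (Fin n) (Fin n) ℝ) (SN : Fin M → Matrix (Fin n) (Fin n) ℝ)
    (μ0 : Fin n → ℝ) (S0 : Matrix (Fin n) (Fin n) ℝ)
    (x : (Fin M → Fin n → ℝ) × (Fin n → ℝ) × Matrix (Fin n) (Fin n) ℝ) :
    (Fin M → Fin n → ℝ) × (Fin n → ℝ) × Matrix (Fin n) (Fin n) ℝ :=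
  let Λ := x.2.2
  let A : Fin M → Matrix (Fin n) (Fin n) ℝ :=
    fun i => Λ⁻¹ * (D i)ᵀ * (D i * Λ⁻¹ * (D i)ᵀ + SN i)⁻¹
  let μ' : Fin n → ℝ :=
    (κ • (1 : Matrix (Fin n) (Fin n) ℝ) + ∑ i, A i * D i)⁻¹.mulVec
      (∑ i, (A i).mulVec (Z i) + κ • μ0)
  let C' : Fin M → Fin n → ℝ := fun i => (A i).mulVec (Z i - (D i).mulVec μ') + μ'
  let Λ' : Matrix (Fin n) (Fin n) ℝ :=
    ((ν + M - n)⁻¹ • (ν • S0 + κ • vecMulVec (μ' - μ0) (μ' - μ0)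
      + ∑ i, vecMulVec (C' i - μ') (C' i - μ')))⁻¹
  (C', μ', Λ')

/-- The alternating-minimization map G is continuous on
`(ℝⁿ)^M × ℝⁿ × S_n^{++}(ℝ)` and maps this set into itself (the Λ-component of
`G(x)` is symmetric positive definite for every x in the domain). -/
theorem stmt_10 (n M : ℕ) (hn : 1 ≤ n) (hM : 1 ≤ M)
    (κ ν : ℝ) (hκ : 0 < κ) (hν : (n : ℝ) - 1 < ν)
    (Z : Fin M → Fin n → ℝ) (D : Fin M → Matrix (Fin n) (Fin n) ℝ)
    (SN : Fin M → Matrix (Fin n) (Fin n) ℝ) (hSN : ∀ i, (SN i).PosDef)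
    (μ0 : Fin n → ℝ) (S0 : Matrix (Fin n) (Fin n) ℝ) (hS0 : S0.PosDef) :
    ContinuousOn (G n M κ ν Z D SN μ0 S0)
      {x : (Fin M → Fin n → ℝ) × (Fin n → ℝ) × Matrix (Fin n) (Fin n) ℝ |
        x.2.2.PosDef} ∧
    ∀ x : (Fin M → Fin n → ℝ) × (Fin n → ℝ) × Matrix (Fin n) (Fin n) ℝ,
      x.2.2.PosDef → (G n M κ ν Z D SN μ0 S0 x).2.2.PosDef := by
  have hn1 : (1:ℝ) ≤ (n:ℝ) := by exact_mod_cast hn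
  have hM1 : (1:ℝ) ≤ (M:ℝ) := by exact_mod_cast hM
  have hν0 : (0:ℝ) < ν := by linarith
  have hcpos : (0:ℝ) < ν + M - n := by linarith
  -- positive definiteness of the inner matrices B i
  have hB : ∀ Λ : Matrix (Fin n) (Fin n) ℝ, Λ.PosDef → ∀ i,
      (D i * Λ⁻¹ * (D i)ᵀ + SN i).PosDef := by
    intro Λ hΛ i
    have h1 : (D i * Λ⁻¹ * (D i)ᵀ).PosSemidef := by
      have := hΛ.inv.posSemidef.mul_mul_conjTranspose_same (D i)
      rwa [Matrix.conjTranspose_eq_transpose_of_trivial] at this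
    exact Matrix.PosDef.posSemidef_add h1 (hSN i)
  -- determinant of the matrix defining μ' is nonzero
  have hK : ∀ Λ : Matrix (Fin n) (Fin n) ℝ, Λ.PosDef →
      (κ • (1 : Matrix (Fin n) (Fin n) ℝ) +
        ∑ i, (Λ⁻¹ * (D i)ᵀ * (D i * Λ⁻¹ * (D i)ᵀ + SN i)⁻¹) * D i).det ≠ 0 := by
    intro Λ hΛ
    have hPd : (κ • Λ + ∑ i, (D i)ᵀ * (D i * Λ⁻¹ * (D i)ᵀ + SN i)⁻¹ * D i).PosDef := by
      apply Matrix.PosDef.add_posSemidef (posDef_smul_pos hκ hΛ)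
      refine Finset.sum_induction _ _ (fun a b ha hb => ha.add hb) Matrix.PosSemidef.zero ?_
      intro i _
      have := ((hB Λ hΛ i).inv.posSemidef).conjTranspose_mul_mul_same (D i)
      rwa [Matrix.conjTranspose_eq_transpose_of_trivial] at this
    have heq : κ • (1 : Matrix (Fin n) (Fin n) ℝ) +
        ∑ i, (Λ⁻¹ * (D i)ᵀ * (D i * Λ⁻¹ * (D i)ᵀ + SN i)⁻¹) * D i =
        Λ⁻¹ * (κ • Λ + ∑ i, (D i)ᵀ * (D i * Λ⁻¹ * (D i)ᵀ + SN i)⁻¹ * D i) := by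
      rw [Matrix.mul_add, Matrix.mul_smul,
        Matrix.nonsing_inv_mul Λ hΛ.det_pos.ne'.isUnit, Finset.mul_sum]
      simp only [Matrix.mul_assoc]
    rw [heq, Matrix.det_mul]
    exact mul_ne_zero hΛ.inv.det_pos.ne' hPd.det_pos.ne'
  -- the matrix defining Λ' is positive definite
  have hW : ∀ (v : Fin n → ℝ) (c : Fin M → Fin n → ℝ),
      (((ν + M - n)⁻¹ : ℝ) • (ν • S0 + κ • vecMulVec v v +
        ∑ i, vecMulVec (c i) (c i))).PosDef := by
    intro v c
    apply posDef_smul_pos (inv_pos.mpr hcpos)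
    apply Matrix.PosDef.add_posSemidef
    · exact Matrix.PosDef.add_posSemidef (posDef_smul_pos hν0 hS0)
        (posSemidef_smul_nonneg hκ.le (vv_psd v))
    · exact Finset.sum_induction _ _ (fun a b ha hb => ha.add hb) Matrix.PosSemidef.zero
        (fun i _ => vv_psd (c i))
  refine ⟨?_, fun x hx => (hW _ _).inv⟩
  -- continuity
  set s := {x : (Fin M → Fin n → ℝ) × (Fin n → ℝ) × Matrix (Fin n) (Fin n) ℝ |
    x.2.2.PosDef} with hs
  have hmem : ∀ x ∈ s, (x.2.2).PosDef := fun x hx => hx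
  have hΛc : ContinuousOn (fun x : (Fin M → Fin n → ℝ) × (Fin n → ℝ) ×
      Matrix (Fin n) (Fin n) ℝ => x.2.2) s :=
    (continuous_snd.comp continuous_snd).continuousOn
  have hInv : ContinuousOn (fun x : (Fin M → Fin n → ℝ) × (Fin n → ℝ) ×
      Matrix (Fin n) (Fin n) ℝ => x.2.2⁻¹) s :=
    conOn_inv hΛc (fun x hx => (hmem x hx).det_pos.ne')
  have hAc : ∀ i, ContinuousOn (fun x : (Fin M → Fin n → ℝ) × (Fin n → ℝ) ×
      Matrix (Fin n) (Fin n) ℝ =>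
      x.2.2⁻¹ * (D i)ᵀ * (D i * x.2.2⁻¹ * (D i)ᵀ + SN i)⁻¹) s := fun i =>
    conOn_mul (conOn_mul hInv continuousOn_const)
      (conOn_inv ((conOn_mul (conOn_mul continuousOn_const hInv)
        continuousOn_const).add continuousOn_const)
        (fun x hx => (hB _ (hmem x hx) i).det_pos.ne'))
  have hKc : ContinuousOn (fun x : (Fin M → Fin n → ℝ) × (Fin n → ℝ) ×
      Matrix (Fin n) (Fin n) ℝ =>
      (κ • (1 : Matrix (Fin n) (Fin n) ℝ) +
        ∑ i, (x.2.2⁻¹ * (D i)ᵀ * (D i * x.2.2⁻¹ * (D i)ᵀ + SN i)⁻¹) * D i)⁻¹) s :=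
    conOn_inv (continuousOn_const.add (continuousOn_finset_sum _
      (fun i _ => conOn_mul (hAc i) continuousOn_const)))
      (fun x hx => hK _ (hmem x hx))
  have hμc : ContinuousOn (fun x : (Fin M → Fin n → ℝ) × (Fin n → ℝ) ×
      Matrix (Fin n) (Fin n) ℝ =>
      (κ • (1 : Matrix (Fin n) (Fin n) ℝ) +
        ∑ i, (x.2.2⁻¹ * (D i)ᵀ * (D i * x.2.2⁻¹ * (D i)ᵀ + SN i)⁻¹) * D i)⁻¹.mulVec
        (∑ i, (x.2.2⁻¹ * (D i)ᵀ * (D i * x.2.2⁻¹ * (D i)ᵀ + SN i)⁻¹).mulVec (Z i)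
          + κ • μ0)) s :=
    conOn_mulVec hKc ((continuousOn_finset_sum _
      (fun i _ => conOn_mulVec (hAc i) continuousOn_const)).add continuousOn_const)
  have hCc : ∀ i, ContinuousOn (fun x : (Fin M → Fin n → ℝ) × (Fin n → ℝ) ×
      Matrix (Fin n) (Fin n) ℝ =>
      (x.2.2⁻¹ * (D i)ᵀ * (D i * x.2.2⁻¹ * (D i)ᵀ + SN i)⁻¹).mulVec
        (Z i - (D i).mulVec
          ((κ • (1 : Matrix (Fin n) (Fin n) ℝ) +
            ∑ j, (x.2.2⁻¹ * (D j)ᵀ * (D j * x.2.2⁻¹ * (D j)ᵀ + SN j)⁻¹) * D j)⁻¹.mulVec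
            (∑ j, (x.2.2⁻¹ * (D j)ᵀ * (D j * x.2.2⁻¹ * (D j)ᵀ + SN j)⁻¹).mulVec (Z j)
              + κ • μ0)))
        + (κ • (1 : Matrix (Fin n) (Fin n) ℝ) +
            ∑ j, (x.2.2⁻¹ * (D j)ᵀ * (D j * x.2.2⁻¹ * (D j)ᵀ + SN j)⁻¹) * D j)⁻¹.mulVec
            (∑ j, (x.2.2⁻¹ * (D j)ᵀ * (D j * x.2.2⁻¹ * (D j)ᵀ + SN j)⁻¹).mulVec (Z j)
              + κ • μ0)) s := fun i =>
    (conOn_mulVec (hAc i) (continuousOn_const.sub (conOn_mulVec continuousOn_const hμc))).add hμc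
  refine ContinuousOn.prodMk (continuousOn_pi.mpr (fun i => hCc i)) (ContinuousOn.prodMk hμc ?_)
  refine conOn_inv (ContinuousOn.const_smul (((continuousOn_const.add
    ((conOn_vecMulVec (hμc.sub continuousOn_const) (hμc.sub continuousOn_const)).const_smul κ)).add
    (continuousOn_finset_sum _ (fun i _ => conOn_vecMulVec ((hCc i).sub hμc) ((hCc i).sub hμc)))))
    ((ν + M - n)⁻¹ : ℝ)) (fun x hx => (hW _ _).det_pos.ne')
end

section
/- Let (x^l)_{l≥0} be the sequence in (ℝ^n)^M × ℝ^n × S_n^{++}(ℝ) generated by x^{l+1} = G(x^l) from an arbitrary starting point x^0 in the domain. Then the real sequence (f(x^l))_{l≥0} is nonincreasing and converges to a finite limit. -/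
open Matrix Filter

set_option linter.unusedSectionVars false
set_option maxHeartbeats 2000000

section Helpers
variable {m : Type*} [Fintype m] [DecidableEq m]

private lemma quadNonneg' {W : Matrix m m ℝ} (hW : W.PosSemidef) (x : m → ℝ) :
    0 ≤ x ⬝ᵥ W.mulVec x := by
  simpa using hW.dotProduct_mulVec_nonneg x

private lemma symmDot' {W : Matrix m m ℝ} (hW : W.IsHermitian) (x y : m → ℝ) :
    x ⬝ᵥ W.mulVec y = (W.mulVec x) ⬝ᵥ y := by
  have hT : Wᵀ = W := by
    simpa [Matrix.IsHermitian, conjTranspose_eq_transpose_of_trivial] using hW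
  rw [dotProduct_mulVec, ← mulVec_transpose, hT]

private lemma expandQuad' {W : Matrix m m ℝ} (hW : W.IsHermitian) (u v : m → ℝ) :
    (u + v) ⬝ᵥ W.mulVec (u + v)
      = u ⬝ᵥ W.mulVec u + v ⬝ᵥ W.mulVec v + 2 * (u ⬝ᵥ W.mulVec v) := by
  have hsym : v ⬝ᵥ W.mulVec u = u ⬝ᵥ W.mulVec v := by
    rw [symmDot' hW v u, dotProduct_comm]
  rw [mulVec_add, dotProduct_add, add_dotProduct, add_dotProduct, hsym]
  ring

private lemma posDefSmul' {S : Matrix m m ℝ} (hS : S.PosDef) {c : ℝ} (hc : 0 < c) :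
    (c • S).PosDef := by
  refine Matrix.PosDef.of_dotProduct_mulVec_pos ?_ ?_
  · have h := hS.1
    simp only [Matrix.IsHermitian, conjTranspose_eq_transpose_of_trivial] at h ⊢
    rw [transpose_smul, h]
  · intro x hx
    rw [smul_mulVec, dotProduct_smul, smul_eq_mul]
    exact mul_pos hc (hS.dotProduct_mulVec_pos hx)

private lemma psdSmul' {S : Matrix m m ℝ} (hS : S.PosSemidef) {c : ℝ} (hc : 0 ≤ c) :
    (c • S).PosSemidef := by
  refine Matrix.PosSemidef.of_dotProduct_mulVec_nonneg ?_ ?_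
  · have h := hS.1
    simp only [Matrix.IsHermitian, conjTranspose_eq_transpose_of_trivial] at h ⊢
    rw [transpose_smul, h]
  · intro x
    rw [smul_mulVec, dotProduct_smul, smul_eq_mul]
    exact mul_nonneg hc (hS.dotProduct_mulVec_nonneg x)

private lemma vecMulVecPsd' (v : m → ℝ) : (vecMulVec v v).PosSemidef := by
  refine Matrix.PosSemidef.of_dotProduct_mulVec_nonneg ?_ ?_
  · simp only [Matrix.IsHermitian, conjTranspose_eq_transpose_of_trivial]
    ext i j
    simp [vecMulVec_apply, transpose_apply, mul_comm]
  · intro x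
    have h : (star x) ⬝ᵥ (vecMulVec v v).mulVec x = (v ⬝ᵥ x) * (v ⬝ᵥ x) := by
      simp only [star_trivial, dotProduct, mulVec, vecMulVec_apply, Finset.mul_sum,
        Finset.sum_mul]
      rw [Finset.sum_comm]
      exact Finset.sum_congr rfl fun i _ => Finset.sum_congr rfl fun j _ => by ring
    rw [h]
    exact mul_self_nonneg _

private lemma traceVecMulVec' (x : m → ℝ) (Λ : Matrix m m ℝ) :
    x ⬝ᵥ Λ.mulVec x = (vecMulVec x x * Λ).trace := by
  rw [trace_mul_comm]
  simp only [Matrix.trace, Matrix.diag, mul_apply, vecMulVec_apply, dotProduct, mulVec]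
  refine Finset.sum_congr rfl fun i _ => ?_
  rw [Finset.mul_sum]
  exact Finset.sum_congr rfl fun j _ => by ring

private lemma traceSumEig' {A : Matrix m m ℝ} (hA : A.IsHermitian) :
    A.trace = ∑ i, hA.eigenvalues i := by
  simpa using hA.trace_eq_sum_eigenvalues

private lemma traceLogDet' {P : Matrix m m ℝ} (hP : P.PosDef) :
    (Fintype.card m : ℝ) ≤ P.trace - Real.log P.det := by
  have he := hP.eigenvalues_pos
  have hdet : P.det = ∏ i, hP.1.eigenvalues i := by
    simpa using hP.1.det_eq_prod_eigenvalues
  have hlog : Real.log P.det = ∑ i, Real.log (hP.1.eigenvalues i) := by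
    rw [hdet, Real.log_prod]
    exact fun i _ => (he i).ne'
  rw [traceSumEig' hP.1, hlog, ← Finset.sum_sub_distrib]
  have h : ∀ i ∈ Finset.univ, (1:ℝ) ≤ hP.1.eigenvalues i - Real.log (hP.1.eigenvalues i) := by
    intro i _
    have := Real.log_le_sub_one_of_pos (he i)
    linarith
  calc (Fintype.card m : ℝ) = ∑ _i : m, (1:ℝ) := by simp
    _ ≤ _ := Finset.sum_le_sum h

private lemma posDefConj' {Λ : Matrix m m ℝ} (hΛ : Λ.PosDef) {R : Matrix m m ℝ}
    (hR : IsUnit R.det) : (Rᵀ * Λ * R).PosDef := by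
  refine Matrix.PosDef.of_dotProduct_mulVec_pos ?_ ?_
  · have h := hΛ.1
    simp only [Matrix.IsHermitian, conjTranspose_eq_transpose_of_trivial] at h ⊢
    rw [transpose_mul, transpose_mul, transpose_transpose, h, Matrix.mul_assoc]
  · intro x hx
    have hinj : Function.Injective (R.mulVec) :=
      mulVec_injective_iff_isUnit.mpr (isUnit_iff_isUnit_det R |>.2 hR)
    have hRx : R.mulVec x ≠ 0 := fun h => hx (hinj (by simpa using h))
    have := hΛ.dotProduct_mulVec_pos hRx
    simpa [star_trivial, Matrix.mul_assoc, ← mulVec_mulVec, dotProduct_mulVec,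
      ← mulVec_transpose] using this

open scoped MatrixOrder in
private lemma traceLogDetMul' {B Λ : Matrix m m ℝ} (hB : B.PosDef) (hΛ : Λ.PosDef) :
    (Fintype.card m : ℝ) + Real.log B.det + Real.log Λ.det ≤ (B * Λ).trace := by
  obtain ⟨hBpsd⟩ : Nonempty (PLift (B.PosSemidef)) := ⟨⟨hB.posSemidef⟩⟩
  set R := CFC.sqrt B with hRdef
  have hRR : R * R = B := CFC.sqrt_mul_sqrt_self B hBpsd.down.nonneg
  have hRsymm : Rᵀ = R := by
    have := (CFC.sqrt_nonneg B).posSemidef.1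
    simpa [Matrix.IsHermitian, conjTranspose_eq_transpose_of_trivial] using this
  have hdetR : IsUnit R.det := by
    have hsq : R.det * R.det = B.det := by rw [← det_mul, hRR]
    have hBd := hB.det_pos
    have hne : R.det ≠ 0 := by
      intro h; rw [h, zero_mul] at hsq; rw [← hsq] at hBd; exact lt_irrefl _ hBd
    exact hne.isUnit
  have hconj : (Rᵀ * Λ * R).PosDef := posDefConj' hΛ hdetR
  have htr : (B * Λ).trace = (Rᵀ * Λ * R).trace := by
    rw [hRsymm, ← hRR, Matrix.mul_assoc, trace_mul_comm, Matrix.mul_assoc]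
  have hdet : (Rᵀ * Λ * R).det = B.det * Λ.det := by
    rw [det_mul, det_mul, det_transpose]
    rw [show R.det * Λ.det * R.det = (R.det * R.det) * Λ.det by ring, ← det_mul, hRR]
  have hkey := traceLogDet' hconj
  rw [hdet, Real.log_mul hB.det_pos.ne' hΛ.det_pos.ne'] at hkey
  rw [htr]
  linarith

private lemma lambdaStep' {S Λ : Matrix m m ℝ} (hS : S.PosDef) (hΛ : Λ.PosDef) {a : ℝ}
    (ha : 0 < a) :
    -(a/2) * Real.log ((a⁻¹ • S)⁻¹).det + (1/2) * (S * (a⁻¹ • S)⁻¹).trace ≤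
      -(a/2) * Real.log Λ.det + (1/2) * (S * Λ).trace := by
  have hB : (a⁻¹ • S).PosDef := posDefSmul' hS (by positivity)
  have ha' : a⁻¹ ≠ 0 := by positivity
  haveI := invertibleOfNonzero ha'
  have hinv : (a⁻¹ • S)⁻¹ = a • S⁻¹ := by
    rw [Matrix.inv_smul (A := S) (a⁻¹) hS.det_pos.ne'.isUnit, invOf_eq_inv, inv_inv]
  have htr' : (S * (a⁻¹ • S)⁻¹).trace = a * (Fintype.card m : ℝ) := by
    rw [hinv, Matrix.mul_smul, trace_smul, Matrix.mul_nonsing_inv _ hS.det_pos.ne'.isUnit,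
      trace_one]
    simp [mul_comm]
  have hdet' : Real.log ((a⁻¹ • S)⁻¹).det = -Real.log (a⁻¹ • S).det := by
    rw [Matrix.det_nonsing_inv, Ring.inverse_eq_inv, Real.log_inv]
  have hkey := traceLogDetMul' hB hΛ
  have htrBL : ((a⁻¹ • S) * Λ).trace = a⁻¹ * (S * Λ).trace := by
    rw [Matrix.smul_mul, trace_smul]; simp
  rw [htrBL] at hkey
  rw [htr', hdet']
  have hSL : a * (a⁻¹ * (S * Λ).trace) = (S * Λ).trace := by field_simp
  nlinarith [hkey, ha, mul_le_mul_of_nonneg_left hkey ha.le]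

end Helpers

section FinHelpers
variable {n M : ℕ}

private lemma sumPsd' {P : Fin M → Matrix (Fin n) (Fin n) ℝ} (hP : ∀ i, (P i).PosSemidef) :
    (∑ i, P i).PosSemidef := by
  classical
  exact Finset.sum_induction P _ (fun a b ha hb => ha.add hb) Matrix.PosSemidef.zero
    (fun i _ => hP i)

private lemma sumMulVec' {P : Fin M → Matrix (Fin n) (Fin n) ℝ} (v : Fin n → ℝ) :
    (∑ i, P i) *ᵥ v = ∑ i, (P i) *ᵥ v := by
  ext j
  simp only [mulVec, dotProduct, Finset.sum_apply, Matrix.sum_apply, Finset.sum_mul]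
  rw [Finset.sum_comm]

private lemma sumDot' (v : Fin M → Fin n → ℝ) (w : Fin n → ℝ) :
    (∑ i, v i) ⬝ᵥ w = ∑ i, (v i ⬝ᵥ w) := by
  simp only [dotProduct, Finset.sum_apply, Finset.sum_mul]
  exact Finset.sum_comm

end FinHelpers

section Main
variable {n M : ℕ}

private lemma stationarity
    {κ : ℝ} (hκ : 0 < κ) (Z : Fin M → Fin n → ℝ)
    (D : Fin M → Matrix (Fin n) (Fin n) ℝ) (SN : Fin M → Matrix (Fin n) (Fin n) ℝ)
    (hSN : ∀ i, (SN i).PosDef) (μ0 : Fin n → ℝ)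
    {Λ : Matrix (Fin n) (Fin n) ℝ} (hΛ : Λ.PosDef)
    (A : Fin M → Matrix (Fin n) (Fin n) ℝ)
    (hA : A = fun i => Λ⁻¹ * (D i)ᵀ * (D i * Λ⁻¹ * (D i)ᵀ + SN i)⁻¹)
    (μ' : Fin n → ℝ)
    (hμ' : μ' = (κ • (1 : Matrix (Fin n) (Fin n) ℝ) + ∑ i, A i * D i)⁻¹.mulVec
      (∑ i, (A i).mulVec (Z i) + κ • μ0))
    (C' : Fin M → Fin n → ℝ)
    (hC' : C' = fun i => (A i).mulVec (Z i - (D i).mulVec μ') + μ') :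
    (∀ i, (D i)ᵀ *ᵥ ((SN i)⁻¹ *ᵥ (Z i - D i *ᵥ C' i)) = Λ *ᵥ (C' i - μ')) ∧
      κ • (μ' - μ0) - ∑ i, (C' i - μ') = 0 := by
  subst hC' hμ' hA
  have hΛu : IsUnit Λ.det := hΛ.det_pos.ne'.isUnit
  set A : Fin M → Matrix (Fin n) (Fin n) ℝ :=
    fun i => Λ⁻¹ * (D i)ᵀ * (D i * Λ⁻¹ * (D i)ᵀ + SN i)⁻¹ with hA
  set μ' : Fin n → ℝ := (κ • (1 : Matrix (Fin n) (Fin n) ℝ) + ∑ i, A i * D i)⁻¹.mulVec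
      (∑ i, (A i).mulVec (Z i) + κ • μ0) with hμ'
  set C' : Fin M → Fin n → ℝ := fun i => (A i).mulVec (Z i - (D i).mulVec μ') + μ' with hC'
  have hK : ∀ i, (D i * Λ⁻¹ * (D i)ᵀ + SN i).PosDef := by
    intro i
    have h1 : (D i * Λ⁻¹ * (D i)ᵀ).PosSemidef := by
      have := (hΛ.inv.posSemidef).mul_mul_conjTranspose_same (D i)
      simpa [conjTranspose_eq_transpose_of_trivial] using this
    exact Matrix.PosDef.posSemidef_add h1 (hSN i)
  have hKu : ∀ i, IsUnit (D i * Λ⁻¹ * (D i)ᵀ + SN i).det := fun i => (hK i).det_pos.ne'.isUnit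
  have hI1 : ∀ i, Λ * A i = (D i)ᵀ * (D i * Λ⁻¹ * (D i)ᵀ + SN i)⁻¹ := by
    intro i
    show Λ * (Λ⁻¹ * (D i)ᵀ * (D i * Λ⁻¹ * (D i)ᵀ + SN i)⁻¹) = _
    rw [← Matrix.mul_assoc, ← Matrix.mul_assoc, Matrix.mul_nonsing_inv _ hΛu, Matrix.one_mul]
  have hI2 : ∀ i, (D i)ᵀ * (SN i)⁻¹ * (1 - D i * A i) = Λ * A i := by
    intro i
    have h1 : 1 - D i * A i = SN i * (D i * Λ⁻¹ * (D i)ᵀ + SN i)⁻¹ := by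
      have h2 : D i * A i = (D i * Λ⁻¹ * (D i)ᵀ) * (D i * Λ⁻¹ * (D i)ᵀ + SN i)⁻¹ := by
        show D i * (Λ⁻¹ * (D i)ᵀ * _) = _
        rw [← Matrix.mul_assoc, ← Matrix.mul_assoc]
      rw [h2, ← Matrix.mul_nonsing_inv _ (hKu i), ← Matrix.sub_mul]
      congr 1
      abel
    rw [h1, ← Matrix.mul_assoc, Matrix.mul_assoc _ ((SN i)⁻¹) (SN i),
      Matrix.nonsing_inv_mul _ (hSN i).det_pos.ne'.isUnit, Matrix.mul_one, hI1]
  have hTfac : κ • (1 : Matrix (Fin n) (Fin n) ℝ) + ∑ i, A i * D i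
      = Λ⁻¹ * (κ • Λ + ∑ i, (D i)ᵀ * (D i * Λ⁻¹ * (D i)ᵀ + SN i)⁻¹ * D i) := by
    rw [Matrix.mul_add, Matrix.mul_smul, Matrix.nonsing_inv_mul _ hΛu, Finset.mul_sum]
    congr 1
    refine Finset.sum_congr rfl fun i _ => ?_
    show Λ⁻¹ * (D i)ᵀ * (D i * Λ⁻¹ * (D i)ᵀ + SN i)⁻¹ * D i = _
    simp only [Matrix.mul_assoc]
  have hPpd : (κ • Λ + ∑ i, (D i)ᵀ * (D i * Λ⁻¹ * (D i)ᵀ + SN i)⁻¹ * D i).PosDef := by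
    refine (posDefSmul' hΛ hκ).add_posSemidef (sumPsd' fun i => ?_)
    have := ((hK i).inv.posSemidef).conjTranspose_mul_mul_same (D i)
    simpa [conjTranspose_eq_transpose_of_trivial] using this
  have hTu : IsUnit (κ • (1 : Matrix (Fin n) (Fin n) ℝ) + ∑ i, A i * D i).det := by
    rw [hTfac, det_mul]
    exact (Matrix.isUnit_nonsing_inv_det _ hΛu).mul hPpd.det_pos.ne'.isUnit
  have hμeq : (κ • (1 : Matrix (Fin n) (Fin n) ℝ) + ∑ i, A i * D i) *ᵥ μ'
      = ∑ i, (A i).mulVec (Z i) + κ • μ0 := by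
    rw [hμ', mulVec_mulVec, Matrix.mul_nonsing_inv _ hTu, one_mulVec]
  constructor
  · intro i
    have hCμ : C' i - μ' = A i *ᵥ (Z i - D i *ᵥ μ') := by
      show A i *ᵥ (Z i - D i *ᵥ μ') + μ' - μ' = _
      abel
    have hZC : Z i - D i *ᵥ C' i = (1 - D i * A i) *ᵥ (Z i - D i *ᵥ μ') := by
      rw [Matrix.sub_mulVec, one_mulVec, ← mulVec_mulVec, ← hCμ]
      show _ = Z i - D i *ᵥ μ' - D i *ᵥ (C' i - μ')
      rw [mulVec_sub]
      abel
    rw [hZC, hCμ, mulVec_mulVec, mulVec_mulVec, hI2 i, ← mulVec_mulVec]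
  · have hexp : (κ • (1 : Matrix (Fin n) (Fin n) ℝ) + ∑ i, A i * D i) *ᵥ μ'
        = κ • μ' + ∑ i, (A i * D i) *ᵥ μ' := by
      rw [Matrix.add_mulVec, smul_mulVec, one_mulVec, sumMulVec']
    have hsum : ∑ i, (C' i - μ') = ∑ i, (A i *ᵥ Z i - (A i * D i) *ᵥ μ') := by
      refine Finset.sum_congr rfl fun i _ => ?_
      show A i *ᵥ (Z i - D i *ᵥ μ') + μ' - μ' = _
      rw [mulVec_sub, mulVec_mulVec]
      abel
    rw [hsum, Finset.sum_sub_distrib]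
    have heq := hμeq
    rw [hexp] at heq
    have h2 : κ • μ' + ∑ i, (A i * D i) *ᵥ μ' - (∑ i, A i *ᵥ Z i + κ • μ0) = 0 := by
      rw [heq]; abel
    rw [smul_sub]
    have h3 : κ • μ' - κ • μ0 - (∑ i, A i *ᵥ Z i - ∑ i, (A i * D i) *ᵥ μ') = 0 := by
      rw [← h2]; abel
    convert h3 using 2


private lemma cmuStep (κ ν : ℝ) (hκ : 0 < κ) (Z : Fin M → Fin n → ℝ)
    (D : Fin M → Matrix (Fin n) (Fin n) ℝ) (SN : Fin M → Matrix (Fin n) (Fin n) ℝ)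
    (hSN : ∀ i, (SN i).PosDef) (μ0 : Fin n → ℝ) (S0 : Matrix (Fin n) (Fin n) ℝ)
    (C : Fin M → Fin n → ℝ) (μ : Fin n → ℝ) {Λ : Matrix (Fin n) (Fin n) ℝ}
    (hΛ : Λ.PosDef) :
    f n M κ ν Z D SN μ0 S0 (G n M κ ν Z D SN μ0 S0 (C, μ, Λ)).1
      (G n M κ ν Z D SN μ0 S0 (C, μ, Λ)).2.1 Λ ≤ f n M κ ν Z D SN μ0 S0 C μ Λ := by
  set A : Fin M → Matrix (Fin n) (Fin n) ℝ :=
    fun i => Λ⁻¹ * (D i)ᵀ * (D i * Λ⁻¹ * (D i)ᵀ + SN i)⁻¹ with hA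
  set μ' : Fin n → ℝ := (κ • (1 : Matrix (Fin n) (Fin n) ℝ) + ∑ i, A i * D i)⁻¹.mulVec
      (∑ i, (A i).mulVec (Z i) + κ • μ0) with hμ'
  set C' : Fin M → Fin n → ℝ := fun i => (A i).mulVec (Z i - (D i).mulVec μ') + μ' with hC'
  have hG1 : (G n M κ ν Z D SN μ0 S0 (C, μ, Λ)).1 = C' := rfl
  have hG2 : (G n M κ ν Z D SN μ0 S0 (C, μ, Λ)).2.1 = μ' := rfl
  rw [hG1, hG2]
  obtain ⟨hS1, hS2⟩ := stationarity hκ Z D SN hSN μ0 hΛ A hA μ' hμ' C' hC'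
  have hW : ∀ i, ((SN i)⁻¹).PosSemidef := fun i => (hSN i).inv.posSemidef
  have hWT : ∀ i, ((SN i)⁻¹)ᵀ = (SN i)⁻¹ := by
    intro i
    simpa [Matrix.IsHermitian, conjTranspose_eq_transpose_of_trivial] using (hSN i).inv.1
  -- cross identities
  have cr1 : ∀ i, (Z i - D i *ᵥ C' i) ⬝ᵥ ((SN i)⁻¹ *ᵥ (D i *ᵥ (C' i - C i)))
      = (Λ *ᵥ (C' i - μ')) ⬝ᵥ (C' i - C i) := by
    intro i
    rw [mulVec_mulVec, dotProduct_mulVec, ← mulVec_transpose, transpose_mul, hWT,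
      ← mulVec_mulVec, hS1 i]
  have cr2 : ∀ i, (C' i - μ') ⬝ᵥ (Λ *ᵥ ((C i - C' i) - (μ - μ')))
      = (Λ *ᵥ (C' i - μ')) ⬝ᵥ ((C i - C' i) - (μ - μ')) := fun i => symmDot' hΛ.1 _ _
  -- decompositions
  have h1 : ∀ i, Z i - D i *ᵥ C i = (Z i - D i *ᵥ C' i) + D i *ᵥ (C' i - C i) := by
    intro i; rw [mulVec_sub]; abel
  have h2 : ∀ i, C i - μ = (C' i - μ') + ((C i - C' i) - (μ - μ')) := by intro i; abel
  have h3 : μ - μ0 = (μ' - μ0) + (μ - μ') := by abel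
  -- expansions
  have E1 : ∑ i, (Z i - (D i).mulVec (C i)) ⬝ᵥ ((SN i)⁻¹).mulVec (Z i - (D i).mulVec (C i))
      = ∑ i, (Z i - (D i).mulVec (C' i)) ⬝ᵥ ((SN i)⁻¹).mulVec (Z i - (D i).mulVec (C' i))
        + ∑ i, (D i *ᵥ (C' i - C i)) ⬝ᵥ ((SN i)⁻¹).mulVec (D i *ᵥ (C' i - C i))
        + 2 * ∑ i, (Λ *ᵥ (C' i - μ')) ⬝ᵥ (C' i - C i) := by
    rw [Finset.mul_sum, ← Finset.sum_add_distrib, ← Finset.sum_add_distrib]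
    refine Finset.sum_congr rfl fun i _ => ?_
    rw [h1 i, expandQuad' (hSN i).inv.1, cr1 i]
  have E2 : ∑ i, (C i - μ) ⬝ᵥ Λ.mulVec (C i - μ)
      = ∑ i, (C' i - μ') ⬝ᵥ Λ.mulVec (C' i - μ')
        + ∑ i, ((C i - C' i) - (μ - μ')) ⬝ᵥ Λ.mulVec ((C i - C' i) - (μ - μ'))
        + 2 * ∑ i, (Λ *ᵥ (C' i - μ')) ⬝ᵥ ((C i - C' i) - (μ - μ')) := by
    rw [Finset.mul_sum, ← Finset.sum_add_distrib, ← Finset.sum_add_distrib]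
    refine Finset.sum_congr rfl fun i _ => ?_
    rw [h2 i, expandQuad' hΛ.1, cr2 i]
  have E3 : (μ - μ0) ⬝ᵥ Λ.mulVec (μ - μ0)
      = (μ' - μ0) ⬝ᵥ Λ.mulVec (μ' - μ0)
        + (μ - μ') ⬝ᵥ Λ.mulVec (μ - μ')
        + 2 * ((μ' - μ0) ⬝ᵥ Λ.mulVec (μ - μ')) := by
    rw [h3, expandQuad' hΛ.1]
  -- total cross term vanishes
  have hcross : ∑ i, (Λ *ᵥ (C' i - μ')) ⬝ᵥ (C' i - C i)
      + ∑ i, (Λ *ᵥ (C' i - μ')) ⬝ᵥ ((C i - C' i) - (μ - μ'))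
      + κ * ((μ' - μ0) ⬝ᵥ Λ.mulVec (μ - μ')) = 0 := by
    have step : ∀ i ∈ Finset.univ, (Λ *ᵥ (C' i - μ')) ⬝ᵥ (C' i - C i)
        + (Λ *ᵥ (C' i - μ')) ⬝ᵥ ((C i - C' i) - (μ - μ'))
        = -((C' i - μ') ⬝ᵥ (Λ *ᵥ (μ - μ'))) := by
      intro i _
      rw [← dotProduct_add]
      have harg : (C' i - C i) + ((C i - C' i) - (μ - μ')) = -(μ - μ') := by abel
      rw [harg, dotProduct_neg, (symmDot' hΛ.1 (C' i - μ') (μ - μ')).symm]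
    rw [← Finset.sum_add_distrib, Finset.sum_congr rfl step, Finset.sum_neg_distrib,
      ← sumDot']
    have hk : κ * ((μ' - μ0) ⬝ᵥ Λ.mulVec (μ - μ'))
        = (κ • (μ' - μ0)) ⬝ᵥ (Λ *ᵥ (μ - μ')) := by
      rw [smul_dotProduct]; simp
    rw [hk]
    have hfin : -((∑ i, (C' i - μ')) ⬝ᵥ (Λ *ᵥ (μ - μ'))) + (κ • (μ' - μ0)) ⬝ᵥ (Λ *ᵥ (μ - μ'))
        = (κ • (μ' - μ0) - ∑ i, (C' i - μ')) ⬝ᵥ (Λ *ᵥ (μ - μ')) := by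
      rw [sub_dotProduct]; ring
    rw [hfin, hS2, zero_dotProduct]
  -- key identity
  have key : f n M κ ν Z D SN μ0 S0 C μ Λ
      = f n M κ ν Z D SN μ0 S0 C' μ' Λ
        + (1/2) * ∑ i, (D i *ᵥ (C' i - C i)) ⬝ᵥ ((SN i)⁻¹).mulVec (D i *ᵥ (C' i - C i))
        + (1/2) * ∑ i, ((C i - C' i) - (μ - μ')) ⬝ᵥ Λ.mulVec ((C i - C' i) - (μ - μ'))
        + (κ/2) * ((μ - μ') ⬝ᵥ Λ.mulVec (μ - μ'))
        + (∑ i, (Λ *ᵥ (C' i - μ')) ⬝ᵥ (C' i - C i)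
          + ∑ i, (Λ *ᵥ (C' i - μ')) ⬝ᵥ ((C i - C' i) - (μ - μ'))
          + κ * ((μ' - μ0) ⬝ᵥ Λ.mulVec (μ - μ'))) := by
    simp only [f]
    rw [E1, E2, E3]
    ring
  have nn1 : 0 ≤ ∑ i, (D i *ᵥ (C' i - C i)) ⬝ᵥ ((SN i)⁻¹).mulVec (D i *ᵥ (C' i - C i)) :=
    Finset.sum_nonneg fun i _ => quadNonneg' (hW i) _
  have nn2 : 0 ≤ ∑ i, ((C i - C' i) - (μ - μ')) ⬝ᵥ Λ.mulVec ((C i - C' i) - (μ - μ')) :=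
    Finset.sum_nonneg fun i _ => quadNonneg' hΛ.posSemidef _
  have nn3 : 0 ≤ (μ - μ') ⬝ᵥ Λ.mulVec (μ - μ') := quadNonneg' hΛ.posSemidef _
  rw [key]
  nlinarith [hcross, nn1, nn2, nn3, hκ, mul_nonneg hκ.le nn3]


private lemma lamStepF (hn : 1 ≤ n) (hM : 1 ≤ M) {κ ν : ℝ} (hκ : 0 < κ)
    (hν : (n : ℝ) - 1 < ν) (Z : Fin M → Fin n → ℝ)
    (D : Fin M → Matrix (Fin n) (Fin n) ℝ) (SN : Fin M → Matrix (Fin n) (Fin n) ℝ)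
    (μ0 : Fin n → ℝ) {S0 : Matrix (Fin n) (Fin n) ℝ} (hS0 : S0.PosDef)
    (C' : Fin M → Fin n → ℝ) (μ' : Fin n → ℝ)
    {Λ : Matrix (Fin n) (Fin n) ℝ} (hΛ : Λ.PosDef) :
    f n M κ ν Z D SN μ0 S0 C' μ'
      (((ν + M - n)⁻¹ • (ν • S0 + κ • vecMulVec (μ' - μ0) (μ' - μ0)
        + ∑ i, vecMulVec (C' i - μ') (C' i - μ')))⁻¹)
      ≤ f n M κ ν Z D SN μ0 S0 C' μ' Λ := by
  have hn' : (1:ℝ) ≤ n := by exact_mod_cast hn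
  have hM' : (1:ℝ) ≤ M := by exact_mod_cast hM
  have hν0 : 0 < ν := by linarith
  have ha : 0 < ν + (M:ℝ) - n := by linarith
  set S : Matrix (Fin n) (Fin n) ℝ := ν • S0 + κ • vecMulVec (μ' - μ0) (μ' - μ0)
    + ∑ i, vecMulVec (C' i - μ') (C' i - μ') with hSdef
  have hS : S.PosDef :=
    (((posDefSmul' hS0 hν0).add_posSemidef
      (psdSmul' (vecMulVecPsd' _) hκ.le)).add_posSemidef (sumPsd' fun i => vecMulVecPsd' _))
  have htr : ∀ Λ₀ : Matrix (Fin n) (Fin n) ℝ, (S * Λ₀).trace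
      = (ν • S0 * Λ₀).trace + κ * ((μ' - μ0) ⬝ᵥ Λ₀.mulVec (μ' - μ0))
        + ∑ i, (C' i - μ') ⬝ᵥ Λ₀.mulVec (C' i - μ') := by
    intro Λ₀
    rw [hSdef, Matrix.add_mul, Matrix.add_mul, trace_add, trace_add, Finset.sum_mul,
      trace_sum]
    simp only [Matrix.smul_mul, trace_smul, smul_eq_mul, traceVecMulVec']
  have hrw : ∀ Λ₀ : Matrix (Fin n) (Fin n) ℝ, f n M κ ν Z D SN μ0 S0 C' μ' Λ₀
      = (1/2) * ∑ i, (Z i - (D i).mulVec (C' i)) ⬝ᵥ ((SN i)⁻¹).mulVec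
          (Z i - (D i).mulVec (C' i))
        - ((ν + M - n)/2) * Real.log Λ₀.det + (1/2) * (S * Λ₀).trace := by
    intro Λ₀
    simp only [f]
    rw [htr Λ₀]
    ring
  rw [hrw, hrw]
  have hkey := lambdaStep' hS hΛ ha
  linarith

private lemma lamPosDef (hn : 1 ≤ n) (hM : 1 ≤ M) {κ ν : ℝ} (hκ : 0 < κ)
    (hν : (n : ℝ) - 1 < ν) (μ0 : Fin n → ℝ) {S0 : Matrix (Fin n) (Fin n) ℝ}
    (hS0 : S0.PosDef) (C' : Fin M → Fin n → ℝ) (μ' : Fin n → ℝ) :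
    (((ν + M - n)⁻¹ • (ν • S0 + κ • vecMulVec (μ' - μ0) (μ' - μ0)
      + ∑ i, vecMulVec (C' i - μ') (C' i - μ')))⁻¹).PosDef := by
  have hn' : (1:ℝ) ≤ n := by exact_mod_cast hn
  have hM' : (1:ℝ) ≤ M := by exact_mod_cast hM
  have hν0 : 0 < ν := by linarith
  have ha : 0 < ν + (M:ℝ) - n := by linarith
  have hS : (ν • S0 + κ • vecMulVec (μ' - μ0) (μ' - μ0)
      + ∑ i, vecMulVec (C' i - μ') (C' i - μ')).PosDef :=
    (((posDefSmul' hS0 hν0).add_posSemidef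
      (psdSmul' (vecMulVecPsd' _) hκ.le)).add_posSemidef (sumPsd' fun i => vecMulVecPsd' _))
  exact (posDefSmul' hS (inv_pos.mpr ha)).inv

private lemma fLB (hn : 1 ≤ n) (hM : 1 ≤ M) {κ ν : ℝ} (hκ : 0 < κ)
    (hν : (n : ℝ) - 1 < ν) (Z : Fin M → Fin n → ℝ)
    (D : Fin M → Matrix (Fin n) (Fin n) ℝ) (SN : Fin M → Matrix (Fin n) (Fin n) ℝ)
    (hSN : ∀ i, (SN i).PosDef) (μ0 : Fin n → ℝ) {S0 : Matrix (Fin n) (Fin n) ℝ}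
    (hS0 : S0.PosDef) :
    ∃ c : ℝ, ∀ (C : Fin M → Fin n → ℝ) (μ : Fin n → ℝ) (Λ : Matrix (Fin n) (Fin n) ℝ),
      Λ.PosDef → c ≤ f n M κ ν Z D SN μ0 S0 C μ Λ := by
  have hn' : (1:ℝ) ≤ n := by exact_mod_cast hn
  have hM' : (1:ℝ) ≤ M := by exact_mod_cast hM
  have hν0 : 0 < ν := by linarith
  have ha : 0 < ν - (n:ℝ) + M := by linarith
  have hB : ((ν - (n:ℝ) + M)⁻¹ • (ν • S0)).PosDef :=
    posDefSmul' (posDefSmul' hS0 hν0) (inv_pos.mpr ha)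
  refine ⟨((ν - (n:ℝ) + M)/2) * ((n:ℝ)
    + Real.log ((ν - (n:ℝ) + M)⁻¹ • (ν • S0)).det), fun C μ Λ hΛ => ?_⟩
  have h1 := traceLogDetMul' hB hΛ
  rw [Fintype.card_fin] at h1
  have htrB : (ν - (n:ℝ) + M) * (((ν - (n:ℝ) + M)⁻¹ • (ν • S0)) * Λ).trace
      = ((ν • S0) * Λ).trace := by
    rw [Matrix.smul_mul, trace_smul, smul_eq_mul, ← mul_assoc,
      mul_inv_cancel₀ ha.ne', one_mul]
  have h2 : (ν - (n:ℝ) + M) * ((n:ℝ) + Real.log ((ν - (n:ℝ) + M)⁻¹ • (ν • S0)).det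
        + Real.log Λ.det) ≤ ((ν • S0) * Λ).trace := by
    rw [← htrB]
    exact mul_le_mul_of_nonneg_left h1 ha.le
  have nn1 : 0 ≤ ∑ i, (Z i - (D i).mulVec (C i)) ⬝ᵥ ((SN i)⁻¹).mulVec
      (Z i - (D i).mulVec (C i)) :=
    Finset.sum_nonneg fun i _ => quadNonneg' (hSN i).inv.posSemidef _
  have nn2 : 0 ≤ ∑ i, (C i - μ) ⬝ᵥ Λ.mulVec (C i - μ) :=
    Finset.sum_nonneg fun i _ => quadNonneg' hΛ.posSemidef _
  have nn3 : 0 ≤ (μ - μ0) ⬝ᵥ Λ.mulVec (μ - μ0) := quadNonneg' hΛ.posSemidef _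
  simp only [f]
  nlinarith [h2, nn1, nn2, nn3, mul_nonneg hκ.le nn3]

/-- Along the sequence generated by `x^{l+1} = G(x^l)` from any starting
point in the domain, the real sequence `(f(x^l))` is nonincreasing and converges. -/
theorem stmt_11 (n M : ℕ) (hn : 1 ≤ n) (hM : 1 ≤ M)
    (κ ν : ℝ) (hκ : 0 < κ) (hν : (n : ℝ) - 1 < ν)
    (Z : Fin M → Fin n → ℝ) (D : Fin M → Matrix (Fin n) (Fin n) ℝ)
    (SN : Fin M → Matrix (Fin n) (Fin n) ℝ) (hSN : ∀ i, (SN i).PosDef)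
    (μ0 : Fin n → ℝ) (S0 : Matrix (Fin n) (Fin n) ℝ) (hS0 : S0.PosDef)
    (x : ℕ → (Fin M → Fin n → ℝ) × (Fin n → ℝ) × Matrix (Fin n) (Fin n) ℝ)
    (h0 : (x 0).2.2.PosDef)
    (hrec : ∀ l, x (l + 1) = G n M κ ν Z D SN μ0 S0 (x l)) :
    Antitone (fun l => f n M κ ν Z D SN μ0 S0 (x l).1 (x l).2.1 (x l).2.2) ∧
    ∃ L : ℝ, Filter.Tendsto
      (fun l => f n M κ ν Z D SN μ0 S0 (x l).1 (x l).2.1 (x l).2.2)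
      Filter.atTop (nhds L) := by
  have hG22 : ∀ p : (Fin M → Fin n → ℝ) × (Fin n → ℝ) × Matrix (Fin n) (Fin n) ℝ,
      (G n M κ ν Z D SN μ0 S0 p).2.2
        = (((ν + M - n)⁻¹ • (ν • S0
          + κ • vecMulVec ((G n M κ ν Z D SN μ0 S0 p).2.1 - μ0)
              ((G n M κ ν Z D SN μ0 S0 p).2.1 - μ0)
          + ∑ i, vecMulVec ((G n M κ ν Z D SN μ0 S0 p).1 i - (G n M κ ν Z D SN μ0 S0 p).2.1)
              ((G n M κ ν Z D SN μ0 S0 p).1 i - (G n M κ ν Z D SN μ0 S0 p).2.1)))⁻¹) :=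
    fun p => rfl
  have hpd : ∀ l, (x l).2.2.PosDef := by
    intro l
    induction l with
    | zero => exact h0
    | succ k _ =>
      rw [hrec k, hG22 (x k)]
      exact lamPosDef hn hM hκ hν μ0 hS0 _ _
  have hdec : ∀ l, f n M κ ν Z D SN μ0 S0 (x (l+1)).1 (x (l+1)).2.1 (x (l+1)).2.2
      ≤ f n M κ ν Z D SN μ0 S0 (x l).1 (x l).2.1 (x l).2.2 := by
    intro l
    rw [hrec l]
    have step1 : f n M κ ν Z D SN μ0 S0 (G n M κ ν Z D SN μ0 S0 (x l)).1
        (G n M κ ν Z D SN μ0 S0 (x l)).2.1 (G n M κ ν Z D SN μ0 S0 (x l)).2.2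
        ≤ f n M κ ν Z D SN μ0 S0 (G n M κ ν Z D SN μ0 S0 (x l)).1
          (G n M κ ν Z D SN μ0 S0 (x l)).2.1 (x l).2.2 := by
      rw [hG22 (x l)]
      exact lamStepF hn hM hκ hν Z D SN μ0 hS0 _ _ (hpd l)
    have step2 : f n M κ ν Z D SN μ0 S0 (G n M κ ν Z D SN μ0 S0 (x l)).1
        (G n M κ ν Z D SN μ0 S0 (x l)).2.1 (x l).2.2
        ≤ f n M κ ν Z D SN μ0 S0 (x l).1 (x l).2.1 (x l).2.2 := by
      have hx : ((x l).1, (x l).2.1, (x l).2.2) = x l := rfl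
      have := cmuStep κ ν hκ Z D SN hSN μ0 S0 (x l).1 (x l).2.1 (hpd l)
      rw [hx] at this
      exact this
    exact le_trans step1 step2
  have hanti : Antitone (fun l => f n M κ ν Z D SN μ0 S0 (x l).1 (x l).2.1 (x l).2.2) :=
    antitone_nat_of_succ_le hdec
  obtain ⟨c, hc⟩ := fLB hn hM hκ hν Z D SN hSN μ0 hS0
  have hbdd : BddBelow (Set.range
      (fun l => f n M κ ν Z D SN μ0 S0 (x l).1 (x l).2.1 (x l).2.2)) := by
    refine ⟨c, ?_⟩
    rintro y ⟨l, rfl⟩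
    exact hc _ _ _ (hpd l)
  exact ⟨hanti, ⟨_, tendsto_atTop_ciInf hanti hbdd⟩⟩

end Main
end
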